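/- For each i ∈ {1,…,2m}, j ∈ {1,…,n} and every (u,v) ∈ g_↓ ∩ TR_ij, the set S = {(u',v') ∈ g_↓ ∩ LB_ij : u' ≤ u and v' ≤ v} is nonempty and has a ≼-greatest element (u*,v*), and r_↓(u,v) = r_↓(u*,v*). -/

import Mathlib

open Set

noncomputable section

/-- The piecewise linear closed curve through the vertices `x 0, x 1, …`:
`f(i+α) = (1-α) • x i + α • x (i+1)`. -/
def fCurve {k : ℕ} (x : ℕ → EuclideanSpace ℝ (Fin k)) (t : ℝ) :
    EuclideanSpace ℝ (Fin k) :=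
  (1 - Int.fract t) • x (⌊t⌋.toNat) + Int.fract t • x (⌊t⌋.toNat + 1)

/-- The extension of the curve from `[0,m]` to `[0,2m]` by `f(u) = f(u-m)` for `u > m`. -/
def fCurveExt {k : ℕ} (m : ℕ) (x : ℕ → EuclideanSpace ℝ (Fin k)) (u : ℝ) :
    EuclideanSpace ℝ (Fin k) :=
  if u ≤ m then fCurve x u else fCurve x (u - m)

/-- The rectangle `D = [0,2m] × [0,n]`. -/
def Dfull (m n : ℕ) : Set (ℝ × ℝ) :=
  Icc (0:ℝ) (2*(m:ℝ)) ×ˢ Icc (0:ℝ) (n:ℝ)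

/-- The free space `D_ε = {(u,v) ∈ D : dist (f_X u) (f_Y v) ≤ ε}`. -/
def Dfree {k : ℕ} (m n : ℕ) (x y : ℕ → EuclideanSpace ℝ (Fin k)) (ε : ℝ) :
    Set (ℝ × ℝ) :=
  {p ∈ Dfull m n | dist (fCurveExt m x p.1) (fCurve y p.2) ≤ ε}

/-- The top side `T = [0,2m] × {n}` of `D`. -/
def Tside (m n : ℕ) : Set (ℝ × ℝ) := Icc (0:ℝ) (2*(m:ℝ)) ×ˢ {(n:ℝ)}

/-- The bottom side `B = [0,2m] × {0}` of `D`. -/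
def Bside (m : ℕ) : Set (ℝ × ℝ) := Icc (0:ℝ) (2*(m:ℝ)) ×ˢ {(0:ℝ)}

/-- A monotone (non-decreasing) path: a connected subset `γ ⊆ Dε` with
`(u-u')·(v-v') ≥ 0` for all `(u,v), (u',v') ∈ γ`. -/
def IsMonPath (Dε γ : Set (ℝ × ℝ)) : Prop :=
  γ ⊆ Dε ∧ IsConnected γ ∧
    ∀ p ∈ γ, ∀ q ∈ γ, (p.1 - q.1) * (p.2 - q.2) ≥ 0

/-- Two points are mutually reachable if some monotone path contains both. -/
def Reach (Dε : Set (ℝ × ℝ)) (p q : ℝ × ℝ) : Prop :=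
  ∃ γ : Set (ℝ × ℝ), IsMonPath Dε γ ∧ p ∈ γ ∧ q ∈ γ

/-- `g↓`: the points of `Dε` mutually reachable with at least one point of `B`. -/
def gDown (m : ℕ) (Dε : Set (ℝ × ℝ)) : Set (ℝ × ℝ) :=
  {p ∈ Dε | ∃ q ∈ Bside m, Reach Dε p q}

/-- `g↑`: the points of `Dε` mutually reachable with at least one point of `T`. -/
def gUp (m n : ℕ) (Dε : Set (ℝ × ℝ)) : Set (ℝ × ℝ) :=
  {p ∈ Dε | ∃ q ∈ Tside m n, Reach Dε p q}

/-- The pointer `r↑(p)`: the maximum `u* ∈ [0,2m]` such that `p` and `(u*, n)`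
are mutually reachable. -/
def rUp (m n : ℕ) (Dε : Set (ℝ × ℝ)) (p : ℝ × ℝ) : ℝ :=
  sSup {u : ℝ | u ∈ Icc (0:ℝ) (2*(m:ℝ)) ∧ Reach Dε p (u, (n:ℝ))}

/-- The pointer `r↓(p)`: for `p` with `p.2 > 0`, the maximum `u* ∈ [0,2m]` such
that `p` and `(u*, 0)` are mutually reachable; on the bottom side `r↓(u,0) = u`. -/
def rDown (m : ℕ) (Dε : Set (ℝ × ℝ)) (p : ℝ × ℝ) : ℝ :=
  if p.2 = 0 then p.1
  else sSup {u : ℝ | u ∈ Icc (0:ℝ) (2*(m:ℝ)) ∧ Reach Dε p (u, (0:ℝ))}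

/-- The cell `D_ij = [i-1,i] × [j-1,j]`. -/
def cellD (i j : ℕ) : Set (ℝ × ℝ) :=
  Icc ((i:ℝ)-1) (i:ℝ) ×ˢ Icc ((j:ℝ)-1) (j:ℝ)

/-- The top side `T_ij` of the cell `D_ij`. -/
def cellT (i j : ℕ) : Set (ℝ × ℝ) := Icc ((i:ℝ)-1) (i:ℝ) ×ˢ {(j:ℝ)}

/-- The bottom side `B_ij` of the cell `D_ij`. -/
def cellB (i j : ℕ) : Set (ℝ × ℝ) := Icc ((i:ℝ)-1) (i:ℝ) ×ˢ {((j:ℝ)-1)}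

/-- The right side `R_ij` of the cell `D_ij`. -/
def cellR (i j : ℕ) : Set (ℝ × ℝ) := {(i:ℝ)} ×ˢ Icc ((j:ℝ)-1) (j:ℝ)

/-- The left side `L_ij` of the cell `D_ij`. -/
def cellL (i j : ℕ) : Set (ℝ × ℝ) := {((i:ℝ)-1)} ×ˢ Icc ((j:ℝ)-1) (j:ℝ)

/-- The partial order `≼` on `D`: `(u1,v1) ≼ (u2,v2)` iff `u1 ≤ u2` and `v1 ≥ v2`. -/
def prec (p q : ℝ × ℝ) : Prop := p.1 ≤ q.1 ∧ q.2 ≤ p.2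

-- ### quadrants

def LLq (c : ℝ × ℝ) : Set (ℝ × ℝ) := {z | z.1 ≤ c.1 ∧ z.2 ≤ c.2}
def URq (c : ℝ × ℝ) : Set (ℝ × ℝ) := {z | c.1 ≤ z.1 ∧ c.2 ≤ z.2}

lemma isClosed_LLq (c : ℝ × ℝ) : IsClosed (LLq c) :=
  (isClosed_le (continuous_fst) continuous_const).inter
    (isClosed_le (continuous_snd) continuous_const)

lemma isClosed_URq (c : ℝ × ℝ) : IsClosed (URq c) :=
  (isClosed_le continuous_const continuous_fst).inter
    (isClosed_le continuous_const continuous_snd)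

lemma self_mem_LLq (c : ℝ × ℝ) : c ∈ LLq c := ⟨le_refl _, le_refl _⟩
lemma self_mem_URq (c : ℝ × ℝ) : c ∈ URq c := ⟨le_refl _, le_refl _⟩

lemma quadrant_of_mon {z c : ℝ × ℝ} (h : (z.1 - c.1) * (z.2 - c.2) ≥ 0) :
    z ∈ LLq c ∪ URq c := by
  rcases le_total z.1 c.1 with h1 | h1 <;> rcases le_total z.2 c.2 with h2 | h2
  · exact Or.inl ⟨h1, h2⟩
  · have hle : (z.1 - c.1) * (z.2 - c.2) ≤ 0 :=
      mul_nonpos_of_nonpos_of_nonneg (by linarith) (by linarith)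
    rcases mul_eq_zero.1 (le_antisymm hle h) with h0 | h0
    · exact Or.inr ⟨by linarith, h2⟩
    · exact Or.inl ⟨h1, by linarith⟩
  · have hle : (z.1 - c.1) * (z.2 - c.2) ≤ 0 :=
      mul_nonpos_of_nonneg_of_nonpos (by linarith) (by linarith)
    rcases mul_eq_zero.1 (le_antisymm hle h) with h0 | h0
    · exact Or.inl ⟨by linarith, h2⟩
    · exact Or.inr ⟨h1, by linarith⟩
  · exact Or.inr ⟨h1, h2⟩

lemma IsMonPath.trimLL {Dε γ : Set (ℝ × ℝ)} {c : ℝ × ℝ} (hγ : IsMonPath Dε γ)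
    (hc : c ∈ γ) : IsMonPath Dε (γ ∩ LLq c) := by
  obtain ⟨hsub, ⟨hne, hconn⟩, hmon⟩ := hγ
  refine ⟨inter_subset_left.trans hsub, ⟨⟨c, hc, self_mem_LLq c⟩, ?_⟩,
    fun p hp q hq => hmon p hp.1 q hq.1⟩
  rw [isPreconnected_closed_iff]
  have key : ∀ t t' : Set (ℝ × ℝ), IsClosed t → IsClosed t' → (γ ∩ LLq c) ⊆ t ∪ t' →
      ((γ ∩ LLq c) ∩ t).Nonempty → ((γ ∩ LLq c) ∩ t').Nonempty → c ∈ t →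
      ((γ ∩ LLq c) ∩ (t ∩ t')).Nonempty := by
    intro t t' ht ht' hcover _ hne2 hct
    obtain ⟨z, hzγ, hz1, hz2⟩ := isPreconnected_closed_iff.1 hconn
      ((t ∩ LLq c) ∪ URq c) (t' ∩ LLq c)
      ((ht.inter (isClosed_LLq c)).union (isClosed_URq c)) (ht'.inter (isClosed_LLq c))
      (fun z hz => by
        rcases quadrant_of_mon (hmon z hz c hc) with hLL | hUR
        · rcases hcover ⟨hz, hLL⟩ with h | h
          · exact Or.inl (Or.inl ⟨h, hLL⟩)
          · exact Or.inr ⟨h, hLL⟩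
        · exact Or.inl (Or.inr hUR))
      ⟨c, hc, Or.inl ⟨hct, self_mem_LLq c⟩⟩
      (by obtain ⟨z, ⟨hz1, hz2⟩, hz3⟩ := hne2; exact ⟨z, hz1, hz3, hz2⟩)
    rcases hz1 with ⟨hzt, hzLL⟩ | hzUR
    · exact ⟨z, ⟨hzγ, hzLL⟩, hzt, hz2.1⟩
    · have hzc : z = c := Prod.ext (le_antisymm hz2.2.1 hzUR.1) (le_antisymm hz2.2.2 hzUR.2)
      exact ⟨z, ⟨hzγ, hz2.2⟩, hzc ▸ hct, hz2.1⟩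
  intro t t' ht ht' hcover hne1 hne2
  rcases hcover ⟨hc, self_mem_LLq c⟩ with hct | hct'
  · exact key t t' ht ht' hcover hne1 hne2 hct
  · obtain ⟨z, hz1, hz2, hz3⟩ := key t' t ht' ht (by rwa [union_comm]) hne2 hne1 hct'
    exact ⟨z, hz1, hz3, hz2⟩

lemma IsMonPath.trimUR {Dε γ : Set (ℝ × ℝ)} {c : ℝ × ℝ} (hγ : IsMonPath Dε γ)
    (hc : c ∈ γ) : IsMonPath Dε (γ ∩ URq c) := by
  obtain ⟨hsub, ⟨hne, hconn⟩, hmon⟩ := hγ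
  refine ⟨inter_subset_left.trans hsub, ⟨⟨c, hc, self_mem_URq c⟩, ?_⟩,
    fun p hp q hq => hmon p hp.1 q hq.1⟩
  rw [isPreconnected_closed_iff]
  have key : ∀ t t' : Set (ℝ × ℝ), IsClosed t → IsClosed t' → (γ ∩ URq c) ⊆ t ∪ t' →
      ((γ ∩ URq c) ∩ t).Nonempty → ((γ ∩ URq c) ∩ t').Nonempty → c ∈ t →
      ((γ ∩ URq c) ∩ (t ∩ t')).Nonempty := by
    intro t t' ht ht' hcover _ hne2 hct
    obtain ⟨z, hzγ, hz1, hz2⟩ := isPreconnected_closed_iff.1 hconn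
      ((t ∩ URq c) ∪ LLq c) (t' ∩ URq c)
      ((ht.inter (isClosed_URq c)).union (isClosed_LLq c)) (ht'.inter (isClosed_URq c))
      (fun z hz => by
        rcases quadrant_of_mon (hmon z hz c hc) with hLL | hUR
        · exact Or.inl (Or.inr hLL)
        · rcases hcover ⟨hz, hUR⟩ with h | h
          · exact Or.inl (Or.inl ⟨h, hUR⟩)
          · exact Or.inr ⟨h, hUR⟩)
      ⟨c, hc, Or.inl ⟨hct, self_mem_URq c⟩⟩
      (by obtain ⟨z, ⟨hz1, hz2⟩, hz3⟩ := hne2; exact ⟨z, hz1, hz3, hz2⟩)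
    rcases hz1 with ⟨hzt, hzUR⟩ | hzLL
    · exact ⟨z, ⟨hzγ, hzUR⟩, hzt, hz2.1⟩
    · have hzc : z = c := Prod.ext (le_antisymm hzLL.1 hz2.2.1) (le_antisymm hzLL.2 hz2.2.2)
      exact ⟨z, ⟨hzγ, hz2.2⟩, hzc ▸ hct, hz2.1⟩
  intro t t' ht ht' hcover hne1 hne2
  rcases hcover ⟨hc, self_mem_URq c⟩ with hct | hct'
  · exact key t t' ht ht' hcover hne1 hne2 hct
  · obtain ⟨z, hz1, hz2, hz3⟩ := key t' t ht' ht (by rwa [union_comm]) hne2 hne1 hct'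
    exact ⟨z, hz1, hz3, hz2⟩

lemma IsMonPath.closure' {Dε γ : Set (ℝ × ℝ)} (hD : IsClosed Dε) (hγ : IsMonPath Dε γ) :
    IsMonPath Dε (closure γ) := by
  obtain ⟨hsub, hconn, hmon⟩ := hγ
  refine ⟨closure_minimal hsub hD, hconn.closure, ?_⟩
  have hkey : closure γ ×ˢ closure γ ⊆
      {x : (ℝ × ℝ) × ℝ × ℝ | 0 ≤ (x.1.1 - x.2.1) * (x.1.2 - x.2.2)} := by
    rw [← closure_prod_eq]
    refine closure_minimal (fun x hx => hmon x.1 hx.1 x.2 hx.2) ?_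
    exact isClosed_le continuous_const (by fun_prop)
  exact fun p hp q hq => hkey (mk_mem_prod hp hq)

lemma monpath_concat {Dε γ₁ γ₂ : Set (ℝ × ℝ)} {c : ℝ × ℝ}
    (h₁ : IsMonPath Dε γ₁) (h₂ : IsMonPath Dε γ₂) (hc₁ : c ∈ γ₁) (hc₂ : c ∈ γ₂)
    (hs₁ : γ₁ ⊆ LLq c) (hs₂ : γ₂ ⊆ URq c) : IsMonPath Dε (γ₁ ∪ γ₂) := by
  obtain ⟨hsub₁, hconn₁, hmon₁⟩ := h₁
  obtain ⟨hsub₂, hconn₂, hmon₂⟩ := h₂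
  refine ⟨union_subset hsub₁ hsub₂, IsConnected.union ⟨c, hc₁, hc₂⟩ hconn₁ hconn₂, ?_⟩
  rintro p (hp | hp) q (hq | hq)
  · exact hmon₁ p hp q hq
  · have h1 := hs₁ hp; have h2 := hs₂ hq
    have hx : 0 ≤ (q.1 - p.1) * (q.2 - p.2) :=
      mul_nonneg (by have := h1.1; have := h2.1; linarith) (by have := h1.2; have := h2.2; linarith)
    nlinarith [hx]
  · have h1 := hs₂ hp; have h2 := hs₁ hq
    have : 0 ≤ (p.1 - q.1) * (p.2 - q.2) :=
      mul_nonneg (by have := h1.1; have := h2.1; linarith) (by have := h1.2; have := h2.2; linarith)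
    exact this
  · exact hmon₂ p hp q hq

lemma monpath_singleton {Dε : Set (ℝ × ℝ)} {z : ℝ × ℝ} (hz : z ∈ Dε) :
    IsMonPath Dε {z} := by
  refine ⟨singleton_subset_iff.2 hz, isConnected_singleton, ?_⟩
  rintro p rfl q rfl
  simp

lemma segment_monpath {Dε : Set (ℝ × ℝ)} {a b : ℝ × ℝ} (h1 : a.1 ≤ b.1) (h2 : a.2 ≤ b.2)
    (hseg : segment ℝ a b ⊆ Dε) : IsMonPath Dε (segment ℝ a b) := by
  refine ⟨hseg, ⟨⟨a, left_mem_segment ℝ a b⟩, (convex_segment a b).isPreconnected⟩, ?_⟩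
  intro p hp q hq
  rw [segment_eq_image'] at hp hq
  obtain ⟨θ, hθ, rfl⟩ := hp
  obtain ⟨θ', hθ', rfl⟩ := hq
  have e1 : (a + θ • (b - a)).1 - (a + θ' • (b - a)).1 = (θ - θ') * (b.1 - a.1) := by
    simp [Prod.fst_add, Prod.smul_fst]; ring
  have e2 : (a + θ • (b - a)).2 - (a + θ' • (b - a)).2 = (θ - θ') * (b.2 - a.2) := by
    simp [Prod.snd_add, Prod.smul_snd]; ring
  rw [e1, e2]
  have key : (θ - θ') * (b.1 - a.1) * ((θ - θ') * (b.2 - a.2))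
      = (θ - θ')^2 * ((b.1 - a.1) * (b.2 - a.2)) := by ring
  rw [ge_iff_le, key]
  exact mul_nonneg (sq_nonneg _) (mul_nonneg (by linarith) (by linarith))

-- ### entry point on cell boundary

lemma exists_entry {Dε γ : Set (ℝ × ℝ)} {p b : ℝ × ℝ} {r1 r2 : ℝ}
    (hγ : IsMonPath Dε γ) (hp : p ∈ γ) (hb : b ∈ γ)
    (hbp : b ∈ LLq p) (hbC : b.1 ≤ r1 ∨ b.2 ≤ r2)
    (hp1 : r1 ≤ p.1) (hp2 : r2 ≤ p.2) :
    ∃ c ∈ γ, c ∈ LLq p ∧ r1 ≤ c.1 ∧ r2 ≤ c.2 ∧ (c.1 = r1 ∨ c.2 = r2) := by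
  have htrim := hγ.trimLL hp
  obtain ⟨hsub, ⟨hne, hconn⟩, hmon⟩ := htrim
  obtain ⟨z, hz1, hz2, hz3⟩ := isPreconnected_closed_iff.1 hconn
    (URq (r1, r2)) ({z : ℝ × ℝ | z.1 ≤ r1} ∪ {z : ℝ × ℝ | z.2 ≤ r2})
    (isClosed_URq _)
    ((isClosed_le continuous_fst continuous_const).union
      (isClosed_le continuous_snd continuous_const))
    (fun z _ => by
      rcases le_or_gt z.1 r1 with h | h
      · exact Or.inr (Or.inl h)
      · rcases le_or_gt z.2 r2 with h' | h'
        · exact Or.inr (Or.inr h')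
        · exact Or.inl ⟨h.le, h'.le⟩)
    ⟨p, ⟨hp, self_mem_LLq p⟩, hp1, hp2⟩
    ⟨b, ⟨hb, hbp⟩, hbC⟩
  refine ⟨z, hz1.1, hz1.2, hz2.1, hz2.2, ?_⟩
  rcases hz3 with h | h
  · exact Or.inl (le_antisymm h hz2.1)
  · exact Or.inr (le_antisymm h hz2.2)

-- ### continuity of the curves

lemma fCurve_nat {k : ℕ} (x : ℕ → EuclideanSpace ℝ (Fin k)) (N : ℕ) :
    fCurve x (N : ℝ) = x N := by
  simp [fCurve, Int.floor_natCast, Int.fract_natCast]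

lemma fCurve_affine {k : ℕ} (x : ℕ → EuclideanSpace ℝ (Fin k)) (kk : ℕ) :
    ∀ t ∈ Icc (kk : ℝ) ((kk : ℝ) + 1),
      fCurve x t = (((kk : ℝ) + 1) - t) • x kk + (t - (kk : ℝ)) • x (kk + 1) := by
  intro t ht
  rcases eq_or_lt_of_le ht.2 with heq | hlt
  · have hcast : (kk : ℝ) + 1 = ((kk + 1 : ℕ) : ℝ) := by push_cast; ring
    rw [heq, hcast, fCurve_nat]
    rw [show ((kk + 1 : ℕ) : ℝ) - ((kk + 1 : ℕ) : ℝ) = 0 by ring]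
    rw [show ((kk + 1 : ℕ) : ℝ) - (kk : ℝ) = 1 by push_cast; ring]
    simp
  · have hfl : ⌊t⌋ = (kk : ℤ) := by
      rw [Int.floor_eq_iff]
      constructor
      · exact_mod_cast ht.1
      · exact_mod_cast hlt
    have hfr : Int.fract t = t - (kk : ℝ) := by
      rw [Int.fract, hfl]; norm_num
    rw [fCurve, hfl, hfr]
    rw [show ((kk : ℤ).toNat) = kk from Int.toNat_natCast kk]
    congr 1
    rw [show (1 : ℝ) - (t - (kk : ℝ)) = ((kk : ℝ) + 1) - t by ring]

lemma fCurve_affine' {k : ℕ} (x : ℕ → EuclideanSpace ℝ (Fin k)) {i : ℕ} (hi : 1 ≤ i) :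
    ∀ u ∈ Icc ((i : ℝ) - 1) (i : ℝ),
      fCurve x u = ((i : ℝ) - u) • x (i - 1) + (u - ((i : ℝ) - 1)) • x i := by
  have hc : ((i - 1 : ℕ) : ℝ) = (i : ℝ) - 1 := by
    rw [Nat.cast_sub hi]; norm_num
  have hi' : (i - 1) + 1 = i := by omega
  intro u hu
  have := fCurve_affine x (i - 1) u (by rw [hc]; constructor <;> [exact hu.1; linarith [hu.2]])
  rw [this, hc, hi']
  congr 2 <;> ring

lemma continuousOn_union_closed {α β : Type*} [TopologicalSpace α] [TopologicalSpace β]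
    {f : α → β} {s t : Set α} (hs : IsClosed s) (ht : IsClosed t)
    (hfs : ContinuousOn f s) (hft : ContinuousOn f t) : ContinuousOn f (s ∪ t) := by
  intro z hz
  apply ContinuousWithinAt.union
  · by_cases h : z ∈ s
    · exact hfs z h
    · exact continuousWithinAt_of_notMem_closure (by rwa [hs.closure_eq])
  · by_cases h : z ∈ t
    · exact hft z h
    · exact continuousWithinAt_of_notMem_closure (by rwa [ht.closure_eq])

lemma fCurve_continuousOn {k : ℕ} (x : ℕ → EuclideanSpace ℝ (Fin k)) :
    ∀ N : ℕ, ContinuousOn (fCurve x) (Icc (0:ℝ) (N : ℝ)) := by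
  intro N
  induction N with
  | zero => simp [Icc_self]
  | succ N ih =>
    have h2 : ContinuousOn (fCurve x) (Icc (N : ℝ) ((N : ℝ) + 1)) := by
      apply ContinuousOn.congr (f := fun t : ℝ =>
        (((N : ℝ) + 1) - t) • x N + (t - (N : ℝ)) • x (N + 1))
      · fun_prop
      · intro t ht; exact fCurve_affine x N t ht
    have heq : Icc (0:ℝ) ((N + 1 : ℕ) : ℝ) = Icc (0:ℝ) (N : ℝ) ∪ Icc (N : ℝ) ((N : ℝ) + 1) := by
      have hc : ((N + 1 : ℕ) : ℝ) = (N : ℝ) + 1 := by push_cast; ring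
      rw [Icc_union_Icc_eq_Icc (by positivity) (by linarith), hc]
    rw [heq]
    exact continuousOn_union_closed isClosed_Icc isClosed_Icc ih h2

lemma fCurveExt_continuousOn {k m : ℕ} (x : ℕ → EuclideanSpace ℝ (Fin k)) (hx : x m = x 0) :
    ContinuousOn (fCurveExt m x) (Icc (0:ℝ) (2*(m:ℝ))) := by
  have h1 : ContinuousOn (fCurveExt m x) (Icc (0:ℝ) (m:ℝ)) := by
    apply (fCurve_continuousOn x m).congr
    intro u hu; rw [fCurveExt, if_pos hu.2]
  have h2 : ContinuousOn (fCurveExt m x) (Icc (m:ℝ) (2*(m:ℝ))) := by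
    have hcomp : ContinuousOn (fun u : ℝ => fCurve x (u - (m:ℝ))) (Icc (m:ℝ) (2*(m:ℝ))) := by
      apply (fCurve_continuousOn x m).comp (by fun_prop)
      intro u hu
      simp only [mem_Icc]
      constructor
      · linarith [hu.1]
      · linarith [hu.2]
    apply hcomp.congr
    intro u hu
    show fCurveExt m x u = fCurve x (u - (m:ℝ))
    rcases lt_or_ge (m:ℝ) u with h | h
    · rw [fCurveExt, if_neg (not_le.2 h)]
    · have hu' : u = (m:ℝ) := le_antisymm h hu.1
      rw [hu', fCurveExt, if_pos le_rfl, sub_self]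
      rw [fCurve_nat, show (0:ℝ) = ((0:ℕ):ℝ) by norm_num, fCurve_nat, hx]
  have heq : Icc (0:ℝ) (2*(m:ℝ)) = Icc (0:ℝ) (m:ℝ) ∪ Icc (m:ℝ) (2*(m:ℝ)) := by
    rw [Icc_union_Icc_eq_Icc (by positivity) (by linarith [Nat.cast_nonneg (α := ℝ) m])]
  rw [heq]
  exact continuousOn_union_closed isClosed_Icc isClosed_Icc h1 h2

lemma isClosed_Dfree {k m n : ℕ} (x y : ℕ → EuclideanSpace ℝ (Fin k)) (hx : x m = x 0)
    (ε : ℝ) : IsClosed (Dfree m n x y ε) := by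
  have hD : IsClosed (Dfull m n) := isClosed_Icc.prod isClosed_Icc
  have hcont : ContinuousOn (fun p : ℝ × ℝ => dist (fCurveExt m x p.1) (fCurve y p.2))
      (Dfull m n) := by
    have hpair : ContinuousOn (fun p : ℝ × ℝ => (fCurveExt m x p.1, fCurve y p.2))
        (Dfull m n) := by
      apply ContinuousOn.prodMk
      · exact (fCurveExt_continuousOn x hx).comp continuous_fst.continuousOn (fun p hp => hp.1)
      · exact (fCurve_continuousOn y n).comp continuous_snd.continuousOn (fun p hp => hp.2)
    exact continuous_dist.comp_continuousOn hpair
  have := hcont.preimage_isClosed_of_isClosed hD (isClosed_Iic (a := ε))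
  convert this using 1
  rfl



lemma fCurveExt_affine_cell {k m : ℕ} (x : ℕ → EuclideanSpace ℝ (Fin k)) (hx : x m = x 0)
    {i : ℕ} (hi1 : 1 ≤ i) (hi2 : i ≤ 2*m) :
    ∃ a b : EuclideanSpace ℝ (Fin k), ∀ u ∈ Icc ((i:ℝ)-1) (i:ℝ),
      fCurveExt m x u = ((i:ℝ) - u) • a + (u - ((i:ℝ)-1)) • b := by
  rcases le_or_gt i m with him | him
  · refine ⟨x (i-1), x i, fun u hu => ?_⟩
    have hu2 : u ≤ (m:ℝ) := le_trans hu.2 (by exact_mod_cast him)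
    rw [fCurveExt, if_pos hu2]
    exact fCurve_affine' x hi1 u hu
  · refine ⟨x (i-m-1), x (i-m), fun u hu => ?_⟩
    have him1 : (m:ℝ) ≤ (i:ℝ) - 1 := by
      have h1 : (m:ℕ) + 1 ≤ i := him
      have h2 := (Nat.cast_le (α := ℝ)).2 h1; push_cast at h2; linarith
    rcases le_or_gt u (m:ℝ) with h | h
    · have hu' : u = (m:ℝ) := le_antisymm h (him1.trans hu.1)
      have hieq : i = m + 1 := by
        have h3 : (i:ℝ) ≤ (m:ℝ) + 1 := by linarith [hu.1, hu'.symm.le]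
        have h4 : (m:ℕ) + 1 ≤ i := him
        have h5 : ((m:ℝ) + 1) ≤ (i:ℝ) := by exact_mod_cast h4
        have : (i:ℝ) = (m:ℝ) + 1 := le_antisymm h3 h5
        exact_mod_cast this
    /- i = m+1, u = m -/
      rw [fCurveExt, if_pos (le_of_eq hu'), hu', fCurve_nat, hx, hieq]
      have e0 : m + 1 - m - 1 = 0 := by omega
      have e1 : ((m+1 : ℕ):ℝ) - (m:ℝ) = 1 := by push_cast; ring
      have e2 : (m:ℝ) - (((m+1 : ℕ):ℝ) - 1) = 0 := by push_cast; ring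
      rw [e0, e1, e2, one_smul, zero_smul, add_zero]
    · rw [fCurveExt, if_neg (not_le.2 h)]
      have hi1' : 1 ≤ i - m := by omega
      have hcast : ((i - m : ℕ) : ℝ) = (i:ℝ) - (m:ℝ) := by
        rw [Nat.cast_sub him.le]
      have hmem : u - (m:ℝ) ∈ Icc (((i-m:ℕ):ℝ) - 1) ((i-m:ℕ):ℝ) := by
        rw [hcast]
        constructor
        · linarith [hu.1]
        · linarith [hu.2]
      have hrep := fCurve_affine' x hi1' (u - (m:ℝ)) hmem
      rw [hrep, hcast]
      have e1 : (i:ℝ) - (m:ℝ) - (u - (m:ℝ)) = (i:ℝ) - u := by ring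
      have e2 : (u - (m:ℝ)) - ((i:ℝ) - (m:ℝ) - 1) = u - ((i:ℝ) - 1) := by ring
      rw [e1, e2]

lemma isClosed_cellD (i j : ℕ) : IsClosed (cellD i j) := isClosed_Icc.prod isClosed_Icc

lemma convex_cellD (i j : ℕ) : Convex ℝ (cellD i j) := (convex_Icc _ _).prod (convex_Icc _ _)

lemma cellD_subset_Dfull {m n i j : ℕ} (hi1 : 1 ≤ i) (hi2 : i ≤ 2*m) (hj1 : 1 ≤ j)
    (hj2 : j ≤ n) : cellD i j ⊆ Dfull m n := by
  rintro z ⟨hz1, hz2⟩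
  have c1 : (1:ℝ) ≤ (i:ℝ) := by exact_mod_cast hi1
  have c2 : (i:ℝ) ≤ 2*(m:ℝ) := by exact_mod_cast hi2
  have c3 : (1:ℝ) ≤ (j:ℝ) := by exact_mod_cast hj1
  have c4 : (j:ℝ) ≤ (n:ℝ) := by exact_mod_cast hj2
  exact ⟨⟨by linarith [hz1.1], by linarith [hz1.2]⟩, ⟨by linarith [hz2.1], by linarith [hz2.2]⟩⟩

lemma cellFree_convex_closed {k m n : ℕ} (x y : ℕ → EuclideanSpace ℝ (Fin k)) (hx : x m = x 0)
    (ε : ℝ) {i j : ℕ} (hi1 : 1 ≤ i) (hi2 : i ≤ 2*m) (hj1 : 1 ≤ j) (hj2 : j ≤ n) :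
    Convex ℝ (Dfree m n x y ε ∩ cellD i j) ∧ IsClosed (Dfree m n x y ε ∩ cellD i j) := by
  obtain ⟨a, b, hab⟩ := fCurveExt_affine_cell x hx hi1 hi2
  obtain ⟨c, d, hcd⟩ : ∃ c d : EuclideanSpace ℝ (Fin k), ∀ v ∈ Icc ((j:ℝ)-1) (j:ℝ),
      fCurve y v = ((j:ℝ) - v) • c + (v - ((j:ℝ)-1)) • d :=
    ⟨y (j-1), y j, fun v hv => fCurve_affine' y hj1 v hv⟩
  set g : ℝ × ℝ → EuclideanSpace ℝ (Fin k) := fun z =>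
    ((((i:ℝ) - z.1) • a + (z.1 - ((i:ℝ)-1)) • b) -
      (((j:ℝ) - z.2) • c + (z.2 - ((j:ℝ)-1)) • d)) with hg
  have hgz : ∀ z ∈ cellD i j, ‖g z‖ = dist (fCurveExt m x z.1) (fCurve y z.2) := by
    intro z hz
    rw [dist_eq_norm, hab z.1 hz.1, hcd z.2 hz.2, hg]
  have hset : Dfree m n x y ε ∩ cellD i j = cellD i j ∩ {z | ‖g z‖ ≤ ε} := by
    ext z
    constructor
    · rintro ⟨⟨_, hzd⟩, hzc⟩
      exact ⟨hzc, by rw [mem_setOf_eq, hgz z hzc]; exact hzd⟩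
    · rintro ⟨hzc, hznorm⟩
      exact ⟨⟨cellD_subset_Dfull hi1 hi2 hj1 hj2 hzc, by rw [← hgz z hzc]; exact hznorm⟩, hzc⟩
  constructor
  · rw [hset]
    intro z hz w hw s t hs ht hst
    refine ⟨convex_cellD i j hz.1 hw.1 hs ht hst, ?_⟩
    have hgcomb : g (s • z + t • w) = s • g z + t • g w := by
      have hts : t = 1 - s := by linarith
      subst hts
      simp only [hg, Prod.fst_add, Prod.snd_add, Prod.smul_fst, Prod.smul_snd, smul_eq_mul]
      module
    show ‖g (s • z + t • w)‖ ≤ ε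
    rw [hgcomb]
    calc ‖s • g z + t • g w‖ ≤ ‖s • g z‖ + ‖t • g w‖ := norm_add_le _ _
      _ = s * ‖g z‖ + t * ‖g w‖ := by
          rw [norm_smul, norm_smul, Real.norm_of_nonneg hs, Real.norm_of_nonneg ht]
      _ ≤ s * ε + t * ε := by
          have h1 : ‖g z‖ ≤ ε := hz.2
          have h2 : ‖g w‖ ≤ ε := hw.2
          have := mul_le_mul_of_nonneg_left h1 hs
          have := mul_le_mul_of_nonneg_left h2 ht
          linarith
      _ = ε := by rw [← add_mul, hst, one_mul]
  · rw [hset]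
    refine (isClosed_cellD i j).inter (isClosed_le ?_ continuous_const)
    have : Continuous g := by rw [hg]; fun_prop
    exact this.norm

-- ### crossing lemma

lemma crossing {Dε Ka Kb : Set (ℝ × ℝ)} {aa bb : ℝ × ℝ} {u ub : ℝ}
    (hKa : IsMonPath Dε Ka) (hKb : IsMonPath Dε Kb) (hKbc : IsCompact Kb)
    (haa : aa ∈ Ka) (hu0 : (u, (0:ℝ)) ∈ Ka)
    (hKaLL : Ka ⊆ LLq aa) (hKaUR : Ka ⊆ URq (u, 0))
    (hbb : bb ∈ Kb) (hub : (ub, (0:ℝ)) ∈ Kb) (hKbLL : Kb ⊆ LLq bb)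
    (hKb2 : ∀ z ∈ Kb, 0 ≤ z.2)
    (h1 : aa.1 ≤ bb.1) (h2 : bb.2 ≤ aa.2) (h3 : ub < u) (h4 : u ≤ bb.1)
    (hbb2 : 0 ≤ bb.2) :
    ∃ w, w ∈ Ka ∩ Kb ∧ w ∈ URq (u, 0) ∧ w ∈ LLq bb := by
  have hsumKb : Icc ub (bb.1 + bb.2) ⊆ (fun z : ℝ × ℝ => z.1 + z.2) '' Kb := by
    have hconn : IsPreconnected ((fun z : ℝ × ℝ => z.1 + z.2) '' Kb) :=
      hKb.2.1.isPreconnected.image _ (Continuous.continuousOn (by fun_prop))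
    have hoc := hconn.ordConnected
    have hmem1 : ub ∈ (fun z : ℝ × ℝ => z.1 + z.2) '' Kb := ⟨(ub, 0), hub, by norm_num⟩
    have hmem2 : bb.1 + bb.2 ∈ (fun z : ℝ × ℝ => z.1 + z.2) '' Kb := ⟨bb, hbb, rfl⟩
    exact hoc.out hmem1 hmem2
  -- normalize the upper end of Ka
  obtain ⟨Ka', top, hpath', hsubKa, hsubUR, hu0', htop', hsum', htopG1⟩ :
      ∃ (Ka' : Set (ℝ × ℝ)) (top : ℝ × ℝ), IsMonPath Dε Ka' ∧ Ka' ⊆ Ka ∧ Ka' ⊆ URq (u, 0) ∧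
        (u, (0:ℝ)) ∈ Ka' ∧ top ∈ Ka' ∧ (∀ w ∈ Ka', w.1 + w.2 ≤ bb.1 + bb.2) ∧
        (∃ z ∈ Kb, z.1 + z.2 = top.1 + top.2 ∧ top.1 ≤ z.1) := by
    rcases le_or_gt (aa.1 + aa.2) (bb.1 + bb.2) with hle | hlt
    · have hsumaa : ub ≤ aa.1 + aa.2 := by
        have := hKaUR haa
        have h5 : u ≤ aa.1 := this.1
        have h6 : (0:ℝ) ≤ aa.2 := this.2
        linarith
      obtain ⟨z, hzKb, hzsum⟩ := hsumKb ⟨hsumaa, hle⟩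
      refine ⟨Ka, aa, hKa, subset_refl _, hKaUR, hu0, haa, ?_, ⟨z, hzKb, hzsum, ?_⟩⟩
      · intro w hw
        have hwa := hKaLL hw
        linarith [hwa.1, hwa.2]
      · have hz2 : z.2 ≤ bb.2 := (hKbLL hzKb).2
        have hzsum' : z.1 + z.2 = aa.1 + aa.2 := hzsum
        linarith
    · -- trim Ka at the diagonal point with sum = bb.1 + bb.2
      have hsumKa : (bb.1 + bb.2) ∈ (fun z : ℝ × ℝ => z.1 + z.2) '' Ka := by
        have hconn : IsPreconnected ((fun z : ℝ × ℝ => z.1 + z.2) '' Ka) :=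
          hKa.2.1.isPreconnected.image _ (Continuous.continuousOn (by fun_prop))
        have hoc := hconn.ordConnected
        have hmem1 : u ∈ (fun z : ℝ × ℝ => z.1 + z.2) '' Ka := ⟨(u, 0), hu0, by norm_num⟩
        have hmem2 : aa.1 + aa.2 ∈ (fun z : ℝ × ℝ => z.1 + z.2) '' Ka := ⟨aa, haa, rfl⟩
        exact hoc.out hmem1 hmem2 ⟨by linarith, hlt.le⟩
      obtain ⟨w', hw'Ka, hw'sum⟩ := hsumKa
      have hw'sum' : w'.1 + w'.2 = bb.1 + bb.2 := hw'sum
      refine ⟨Ka ∩ LLq w', w', hKa.trimLL hw'Ka, inter_subset_left,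
        inter_subset_left.trans hKaUR, ⟨hu0, ?_⟩, ⟨hw'Ka, self_mem_LLq w'⟩, ?_, ?_⟩
      · have := hKaUR hw'Ka
        exact ⟨this.1, this.2⟩
      · intro w hw
        have := hw.2
        simp only [LLq, mem_setOf_eq] at this
        linarith [this.1, this.2, hw'sum']
      · refine ⟨bb, hbb, by linarith [hw'sum'], ?_⟩
        have := (hKaLL hw'Ka).1
        linarith
  -- the two closed relative-position sets
  set G₁ : Set (ℝ × ℝ) := {w | ∃ z ∈ Kb, z.1 + z.2 = w.1 + w.2 ∧ w.1 ≤ z.1} with hG₁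
  set G₂ : Set (ℝ × ℝ) := {w | ∃ z ∈ Kb, z.1 + z.2 = w.1 + w.2 ∧ z.1 ≤ w.1} with hG₂
  have hG1closed : IsClosed G₁ := by
    rw [← isSeqClosed_iff_isClosed]
    intro f w hf hfw
    choose zf hz1 hz2 hz3 using hf
    obtain ⟨z, hzKb, φ, hφ, hzt⟩ := hKbc.tendsto_subseq hz1
    have hfφ : Filter.Tendsto (f ∘ φ) Filter.atTop (nhds w) := hfw.comp hφ.tendsto_atTop
    have t1 : Filter.Tendsto (fun n => (zf (φ n)).1) Filter.atTop (nhds z.1) :=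
      (continuous_fst.tendsto z).comp hzt
    have t2 : Filter.Tendsto (fun n => (zf (φ n)).2) Filter.atTop (nhds z.2) :=
      (continuous_snd.tendsto z).comp hzt
    have s1 : Filter.Tendsto (fun n => (f (φ n)).1) Filter.atTop (nhds w.1) :=
      (continuous_fst.tendsto w).comp hfφ
    have s2 : Filter.Tendsto (fun n => (f (φ n)).2) Filter.atTop (nhds w.2) :=
      (continuous_snd.tendsto w).comp hfφ
    refine ⟨z, hzKb, ?_, ?_⟩
    · refine tendsto_nhds_unique (t1.add t2) ?_
      have : (fun n => (zf (φ n)).1 + (zf (φ n)).2) = fun n => (f (φ n)).1 + (f (φ n)).2 := by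
        funext n; exact hz2 (φ n)
      rw [this]
      exact s1.add s2
    · exact le_of_tendsto_of_tendsto' s1 t1 (fun n => hz3 (φ n))
  have hG2closed : IsClosed G₂ := by
    rw [← isSeqClosed_iff_isClosed]
    intro f w hf hfw
    choose zf hz1 hz2 hz3 using hf
    obtain ⟨z, hzKb, φ, hφ, hzt⟩ := hKbc.tendsto_subseq hz1
    have hfφ : Filter.Tendsto (f ∘ φ) Filter.atTop (nhds w) := hfw.comp hφ.tendsto_atTop
    have t1 : Filter.Tendsto (fun n => (zf (φ n)).1) Filter.atTop (nhds z.1) :=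
      (continuous_fst.tendsto z).comp hzt
    have t2 : Filter.Tendsto (fun n => (zf (φ n)).2) Filter.atTop (nhds z.2) :=
      (continuous_snd.tendsto z).comp hzt
    have s1 : Filter.Tendsto (fun n => (f (φ n)).1) Filter.atTop (nhds w.1) :=
      (continuous_fst.tendsto w).comp hfφ
    have s2 : Filter.Tendsto (fun n => (f (φ n)).2) Filter.atTop (nhds w.2) :=
      (continuous_snd.tendsto w).comp hfφ
    refine ⟨z, hzKb, ?_, ?_⟩
    · refine tendsto_nhds_unique (t1.add t2) ?_
      have : (fun n => (zf (φ n)).1 + (zf (φ n)).2) = fun n => (f (φ n)).1 + (f (φ n)).2 := by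
        funext n; exact hz2 (φ n)
      rw [this]
      exact s1.add s2
    · exact le_of_tendsto_of_tendsto' t1 s1 (fun n => hz3 (φ n))
  -- Ka' is covered by G₁ ∪ G₂
  have hwsum : ∀ w ∈ Ka', w.1 + w.2 ∈ Icc ub (bb.1 + bb.2) := by
    intro w hw
    have h51 : u ≤ w.1 := (hsubUR hw).1
    have h52 : (0:ℝ) ≤ w.2 := (hsubUR hw).2
    exact ⟨by linarith, hsum' w hw⟩
  obtain ⟨w, hwKa', hwG1, hwG2⟩ := isPreconnected_closed_iff.1 hpath'.2.1.isPreconnected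
    G₁ G₂ hG1closed hG2closed
    (fun w hw => by
      obtain ⟨z, hzKb, hzsum⟩ := hsumKb (hwsum w hw)
      rcases le_total w.1 z.1 with h | h
      · exact Or.inl ⟨z, hzKb, hzsum, h⟩
      · exact Or.inr ⟨z, hzKb, hzsum, h⟩)
    ⟨top, htop', htopG1⟩
    (⟨(u, 0), hu0', by
      have humem : u ∈ Icc ub (bb.1 + bb.2) := ⟨h3.le, by linarith⟩
      obtain ⟨z, hzKb, hzsum⟩ := hsumKb humem
      have hzsum' : z.1 + z.2 = u := hzsum
      have hz2 : 0 ≤ z.2 := hKb2 z hzKb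
      refine ⟨z, hzKb, ?_, ?_⟩
      · show z.1 + z.2 = u + 0
        linarith
      · show z.1 ≤ u
        linarith⟩)
  -- the meeting point
  obtain ⟨z1, hz1Kb, hz1sum, hz1le⟩ := hwG1
  obtain ⟨z2, hz2Kb, hz2sum, hz2le⟩ := hwG2
  have hmon := hKb.2.2 z1 hz1Kb z2 hz2Kb
  have hd : z1.1 = z2.1 := by nlinarith [hmon]
  have hw1 : w.1 = z1.1 := le_antisymm hz1le (by linarith)
  have hw2 : w.2 = z1.2 := by linarith
  have hwKb : w ∈ Kb := by
    have : w = z1 := Prod.ext hw1 hw2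
    rw [this]; exact hz1Kb
  exact ⟨w, ⟨hsubKa hwKa', hwKb⟩, hsubUR hwKa', hKbLL hwKb⟩

-- ### the diagonal graph function of a monotone path

def graphH (K : Set (ℝ × ℝ)) (ξ : ℝ) : ℝ :=
  sSup ((fun z : ℝ × ℝ => min z.1 (ξ - z.2)) '' K)

section graphH

variable {K : Set (ℝ × ℝ)} {M ξ ξ' : ℝ}

lemma graphH_bddAbove (hub : ∀ z ∈ K, z.1 ≤ M) :
    BddAbove ((fun z : ℝ × ℝ => min z.1 (ξ - z.2)) '' K) := by
  refine ⟨M, ?_⟩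
  rintro r ⟨z, hz, rfl⟩
  exact le_trans (min_le_left _ _) (hub z hz)

lemma graphH_le (hne : K.Nonempty) (hub : ∀ z ∈ K, z.1 ≤ M) : graphH K ξ ≤ M := by
  apply csSup_le (hne.image _)
  rintro r ⟨z, hz, rfl⟩
  exact le_trans (min_le_left _ _) (hub z hz)

lemma le_graphH (hub : ∀ z ∈ K, z.1 ≤ M) {z : ℝ × ℝ} (hz : z ∈ K) :
    min z.1 (ξ - z.2) ≤ graphH K ξ :=
  le_csSup (graphH_bddAbove hub) ⟨z, hz, rfl⟩

lemma graphH_mono (hne : K.Nonempty) (hub : ∀ z ∈ K, z.1 ≤ M) (hle : ξ ≤ ξ') :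
    graphH K ξ ≤ graphH K ξ' := by
  apply csSup_le (hne.image _)
  rintro r ⟨z, hz, rfl⟩
  exact le_trans (min_le_min le_rfl (by linarith)) (le_graphH hub hz)

lemma graphH_lip (hne : K.Nonempty) (hub : ∀ z ∈ K, z.1 ≤ M) (hle : ξ ≤ ξ') :
    graphH K ξ' ≤ graphH K ξ + (ξ' - ξ) := by
  apply csSup_le (hne.image _)
  rintro r ⟨z, hz, rfl⟩
  have h1 : min z.1 (ξ' - z.2) ≤ min z.1 (ξ - z.2) + (ξ' - ξ) := by
    rcases le_total z.1 (ξ - z.2) with h | h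
    · rw [min_eq_left h]
      exact le_trans (min_le_left _ _) (by linarith)
    · rw [min_eq_right h]
      exact le_trans (min_le_right _ _) (by linarith)
  exact le_trans h1 (add_le_add_left (le_graphH hub hz) _)

lemma graphH_abs (hne : K.Nonempty) (hub : ∀ z ∈ K, z.1 ≤ M) (ξ ξ' : ℝ) :
    |graphH K ξ - graphH K ξ'| ≤ |ξ - ξ'| := by
  rcases le_total ξ ξ' with h | h
  · have h1 := graphH_mono hne hub h
    have h2 := graphH_lip hne hub h
    rw [abs_of_nonpos (by linarith), abs_of_nonpos (by linarith)]
    linarith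
  · have h1 := graphH_mono hne hub h
    have h2 := graphH_lip hne hub h
    rw [abs_of_nonneg (by linarith), abs_of_nonneg (by linarith)]
    linarith

lemma graphH_val (hne : K.Nonempty) (hub : ∀ z ∈ K, z.1 ≤ M)
    (hmon : ∀ p ∈ K, ∀ q ∈ K, (p.1 - q.1) * (p.2 - q.2) ≥ 0)
    {z : ℝ × ℝ} (hz : z ∈ K) : graphH K (z.1 + z.2) = z.1 := by
  apply le_antisymm
  · apply csSup_le (hne.image _)
    rintro r ⟨z', hz', rfl⟩
    rcases le_total z'.1 z.1 with h | h
    · exact le_trans (min_le_left _ _) h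
    · rcases eq_or_lt_of_le h with heq | hlt
      · exact le_trans (min_le_left _ _) (le_of_eq heq.symm)
      · have hmon' := hmon z' hz' z hz
        have h2 : z.2 ≤ z'.2 := by nlinarith [hmon']
        exact le_trans (min_le_right _ _) (by linarith)
  · refine le_trans (le_of_eq ?_) (le_graphH hub hz)
    rw [add_sub_cancel_right, min_self]

end graphH

-- ### closedness of gDown along downward vertical limits

lemma gDown_vlimit {m n : ℕ} {Dε : Set (ℝ × ℝ)} (hDcl : IsClosed Dε)
    (hDsub : Dε ⊆ Dfull m n)
    {x0 vinf : ℝ} (hvinf : 0 < vinf) {v : ℕ → ℝ}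
    (hvge : ∀ t, vinf ≤ v t) (hvt : Filter.Tendsto v Filter.atTop (nhds vinf))
    (hmem : ∀ t, (x0, v t) ∈ gDown m Dε)
    (hx0D : (x0, vinf) ∈ Dε) :
    (x0, vinf) ∈ gDown m Dε := by
  have hbound : ∀ z ∈ Dε, 0 ≤ z.1 ∧ z.1 ≤ 2*(m:ℝ) ∧ 0 ≤ z.2 := fun z hz =>
    ⟨(hDsub hz).1.1, (hDsub hz).1.2, (hDsub hz).2.1⟩
  -- Step A: compact trimmed paths
  have hKex : ∀ t : ℕ, ∃ K : Set (ℝ × ℝ), ∃ w : ℝ, IsCompact K ∧ IsMonPath Dε K ∧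
      (x0, v t) ∈ K ∧ (w, (0:ℝ)) ∈ K ∧ K ⊆ LLq (x0, v t) ∧ w ∈ Icc (0:ℝ) (2*(m:ℝ)) := by
    intro t
    obtain ⟨hD, q, hqB, γ, hγ, hpγ, hqγ⟩ := hmem t
    have hq2 : q.2 = 0 := hqB.2
    have hq1 : q.1 ∈ Icc (0:ℝ) (2*(m:ℝ)) := hqB.1
    have hclp := IsMonPath.closure' hDcl hγ
    have hpcl : (x0, v t) ∈ closure γ := subset_closure hpγ
    have htrim := hclp.trimLL hpcl
    refine ⟨closure γ ∩ LLq (x0, v t), q.1, ?_, htrim, ⟨hpcl, self_mem_LLq _⟩, ?_,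
      inter_subset_right, hq1⟩
    · apply IsCompact.of_isClosed_subset
        (isCompact_Icc.prod isCompact_Icc : IsCompact (Dfull m n))
        (isClosed_closure.inter (isClosed_LLq _))
      exact inter_subset_left.trans (closure_minimal (hγ.1.trans hDsub)
        (isClosed_Icc.prod isClosed_Icc))
    · have hqLL : q ∈ LLq (x0, v t) := by
        constructor
        · show q.1 ≤ (x0, v t).1
          have hmon := hγ.2.2 (x0, v t) hpγ q hqγ
          by_contra hcon
          push_neg at hcon
          have hlt : ((x0, v t).1 - q.1) * ((x0, v t).2 - q.2) < 0 := by
            apply mul_neg_of_neg_of_pos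
            · show (x0, v t).1 - q.1 < 0
              simpa using sub_neg.2 hcon
            · show (0:ℝ) < (x0, v t).2 - q.2
              rw [hq2]
              show (0:ℝ) < v t - 0
              linarith [hvge t]
          linarith [hmon]
        · show q.2 ≤ (x0, v t).2
          rw [hq2]
          show (0:ℝ) ≤ v t
          linarith [hvge t]
      have hqe : q = (q.1, (0:ℝ)) := Prod.ext rfl hq2
      rw [← hqe]
      exact ⟨subset_closure hqγ, hqLL⟩
  choose K w hKc hKpath hKtop hKbot hKLL hwIcc using hKex
  -- Step B: convergent subsequence of the bottom points
  obtain ⟨β, hβIcc, φ, hφ, hwt⟩ := isCompact_Icc.tendsto_subseq hwIcc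
  have hvφ : Filter.Tendsto (fun t => v (φ t)) Filter.atTop (nhds vinf) :=
    hvt.comp hφ.tendsto_atTop
  have hwφ : Filter.Tendsto (fun t => w (φ t)) Filter.atTop (nhds β) := hwt
  -- basic facts about the graph functions
  have hKne : ∀ t, (K (φ t)).Nonempty := fun t => ⟨_, hKtop (φ t)⟩
  have hub : ∀ t, ∀ z ∈ K (φ t), z.1 ≤ 2*(m:ℝ) := fun t z hz =>
    (hbound z ((hKpath (φ t)).1 hz)).2.1
  have hmon' : ∀ t, ∀ p ∈ K (φ t), ∀ q ∈ K (φ t), (p.1 - q.1) * (p.2 - q.2) ≥ 0 :=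
    fun t => (hKpath (φ t)).2.2
  have Hle2m : ∀ t ξ, graphH (K (φ t)) ξ ≤ 2*(m:ℝ) := fun t ξ => graphH_le (hKne t) (hub t)
  have Hge : ∀ t ξ, min 0 ξ ≤ graphH (K (φ t)) ξ := by
    intro t ξ
    refine le_trans ?_ (le_graphH (hub t) (hKbot (φ t)))
    show min (0:ℝ) ξ ≤ min (w (φ t)) (ξ - 0)
    exact min_le_min (hwIcc (φ t)).1 (by linarith)
  have Hgraph : ∀ t ξ, ξ ∈ Icc (w (φ t)) (x0 + v (φ t)) →
      ((graphH (K (φ t)) ξ), ξ - graphH (K (φ t)) ξ) ∈ K (φ t) := by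
    intro t ξ hξ
    have hconn : IsPreconnected ((fun z : ℝ × ℝ => z.1 + z.2) '' K (φ t)) :=
      (hKpath (φ t)).2.1.isPreconnected.image _ (Continuous.continuousOn (by fun_prop))
    have hmem1 : w (φ t) ∈ (fun z : ℝ × ℝ => z.1 + z.2) '' K (φ t) :=
      ⟨(w (φ t), (0:ℝ)), hKbot (φ t), by norm_num⟩
    have hmem2 : x0 + v (φ t) ∈ (fun z : ℝ × ℝ => z.1 + z.2) '' K (φ t) :=
      ⟨(x0, v (φ t)), hKtop (φ t), rfl⟩
    obtain ⟨z, hz, hzsum⟩ := hconn.ordConnected.out hmem1 hmem2 hξ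
    have hzsum' : z.1 + z.2 = ξ := hzsum
    have hval := graphH_val (hKne t) (hub t) (hmon' t) hz
    rw [hzsum'] at hval
    have heq : ((graphH (K (φ t)) ξ), ξ - graphH (K (φ t)) ξ) = z :=
      Prod.ext (by rw [hval]) (by show ξ - graphH (K (φ t)) ξ = z.2; rw [hval]; linarith)
    rw [heq]; exact hz
  have Hatw : ∀ t, graphH (K (φ t)) (w (φ t)) = w (φ t) := by
    intro t
    have := graphH_val (hKne t) (hub t) (hmon' t) (hKbot (φ t))
    simpa using this
  have Hattop : ∀ t, graphH (K (φ t)) (x0 + v (φ t)) = x0 := by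
    intro t
    exact graphH_val (hKne t) (hub t) (hmon' t) (hKtop (φ t))
  -- Step D: the limit function
  set h : ℝ → ℝ := fun ξ => Filter.limsup (fun t => graphH (K (φ t)) ξ) Filter.atTop with hhdef
  have hbddab : ∀ ξ, Filter.IsBoundedUnder (· ≤ ·) Filter.atTop
      (fun t => graphH (K (φ t)) ξ) :=
    fun ξ => Filter.isBoundedUnder_of ⟨2*(m:ℝ), fun t => Hle2m t ξ⟩
  have hbddbel : ∀ ξ, Filter.IsBoundedUnder (· ≥ ·) Filter.atTop
      (fun t => graphH (K (φ t)) ξ) :=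
    fun ξ => Filter.isBoundedUnder_of ⟨min 0 ξ, fun t => Hge t ξ⟩
  have hcobdd : ∀ ξ, Filter.IsCoboundedUnder (· ≤ ·) Filter.atTop
      (fun t => graphH (K (φ t)) ξ) :=
    fun ξ => (hbddbel ξ).isCoboundedUnder_le
  have hmono : ∀ {ξ ξ'}, ξ ≤ ξ' → h ξ ≤ h ξ' := by
    intro ξ ξ' hle
    exact Filter.limsup_le_limsup
      (Filter.Eventually.of_forall (fun t => graphH_mono (hKne t) (hub t) hle))
      (hcobdd ξ) (hbddab ξ')
  have hlip : ∀ {ξ ξ'}, ξ ≤ ξ' → h ξ' ≤ h ξ + (ξ' - ξ) := by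
    intro ξ ξ' hle
    have h1 : h ξ' ≤ Filter.limsup (fun t => graphH (K (φ t)) ξ + (ξ' - ξ)) Filter.atTop :=
      Filter.limsup_le_limsup
        (Filter.Eventually.of_forall (fun t => graphH_lip (hKne t) (hub t) hle))
        (hcobdd ξ')
        (Filter.isBoundedUnder_of ⟨2*(m:ℝ) + (ξ' - ξ), fun t => by linarith [Hle2m t ξ]⟩)
    rwa [limsup_add_const Filter.atTop (fun t => graphH (K (φ t)) ξ) (ξ' - ξ)
      (hbddab ξ) (hcobdd ξ)] at h1
  have hattop : h (x0 + vinf) = x0 := by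
    apply Filter.Tendsto.limsup_eq
    apply tendsto_of_tendsto_of_tendsto_of_le_of_le
      (g := fun t => x0 - (v (φ t) - vinf)) (h := fun _ => x0)
    · have h0 : Filter.Tendsto (fun t => x0 - (v (φ t) - vinf)) Filter.atTop
          (nhds (x0 - (vinf - vinf))) :=
        tendsto_const_nhds.sub (hvφ.sub tendsto_const_nhds)
      simpa using h0
    · exact tendsto_const_nhds
    · intro t
      show x0 - (v (φ t) - vinf) ≤ graphH (K (φ t)) (x0 + vinf)
      have h1 := graphH_lip (hKne t) (hub t)
        (show x0 + vinf ≤ x0 + v (φ t) by linarith [hvge (φ t)])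
      rw [Hattop t] at h1
      linarith
    · intro t
      show graphH (K (φ t)) (x0 + vinf) ≤ x0
      have h2 := graphH_mono (hKne t) (hub t)
        (show x0 + vinf ≤ x0 + v (φ t) by linarith [hvge (φ t)])
      rw [Hattop t] at h2
      exact h2
  have hatβ : h β = β := by
    apply Filter.Tendsto.limsup_eq
    rw [tendsto_iff_dist_tendsto_zero]
    apply squeeze_zero (g := fun t => 2 * |β - w (φ t)|)
    · intro t; exact dist_nonneg
    · intro t
      have h1 := graphH_abs (hKne t) (hub t) β (w (φ t))
      rw [Hatw t] at h1
      calc dist (graphH (K (φ t)) β) β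
          = |graphH (K (φ t)) β - β| := Real.dist_eq _ _
        _ ≤ |graphH (K (φ t)) β - w (φ t)| + |w (φ t) - β| := abs_sub_le _ _ _
        _ ≤ |β - w (φ t)| + |w (φ t) - β| := by
            have h1' : |graphH (K (φ t)) β - w (φ t)| ≤ |β - w (φ t)| := h1
            linarith
        _ = 2 * |β - w (φ t)| := by rw [abs_sub_comm (w (φ t)) β]; ring
    · have h0 : Filter.Tendsto (fun t => β - w (φ t)) Filter.atTop (nhds (β - β)) :=
        tendsto_const_nhds.sub hwφ
      rw [sub_self] at h0
      have := h0.abs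
      rw [abs_zero] at this
      simpa using this.const_mul 2
  -- graph points are in Dε
  have hgD : ∀ ξ, β < ξ → ξ ≤ x0 + vinf → (h ξ, ξ - h ξ) ∈ Dε := by
    intro ξ hβξ hξtop
    have hclosure : (h ξ, ξ - h ξ) ∈ closure Dε := by
      rw [Metric.mem_closure_iff]
      intro δ hδ
      have hev1 : ∀ᶠ t in Filter.atTop, graphH (K (φ t)) ξ < h ξ + δ :=
        Filter.eventually_lt_of_limsup_lt (lt_add_of_pos_right _ hδ) (hbddab ξ)
      have hev2 : ∀ᶠ t in Filter.atTop, w (φ t) < ξ :=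
        hwφ.eventually (eventually_lt_nhds hβξ)
      have hfr : ∃ᶠ t in Filter.atTop, h ξ - δ < graphH (K (φ t)) ξ :=
        Filter.frequently_lt_of_lt_limsup (hcobdd ξ) (by linarith)
      obtain ⟨t, ht1, ht2, ht3⟩ := (hfr.and_eventually (hev1.and hev2)).exists
      refine ⟨((graphH (K (φ t)) ξ), ξ - graphH (K (φ t)) ξ), ?_, ?_⟩
      · apply (hKpath (φ t)).1
        exact Hgraph t ξ ⟨ht3.le, by linarith [hvge (φ t)]⟩
      · rw [Prod.dist_eq]
        apply max_lt
        · rw [Real.dist_eq, abs_lt]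
          constructor <;> linarith
        · have e2 : dist (h ξ, ξ - h ξ).2
              ((graphH (K (φ t)) ξ), ξ - graphH (K (φ t)) ξ).2
              = |graphH (K (φ t)) ξ - h ξ| := by
            rw [Real.dist_eq]
            show |(ξ - h ξ) - (ξ - graphH (K (φ t)) ξ)| = _
            rw [show (ξ - h ξ) - (ξ - graphH (K (φ t)) ξ)
              = graphH (K (φ t)) ξ - h ξ by ring]
          rw [e2, abs_lt]
          constructor <;> linarith
    rwa [hDcl.closure_eq] at hclosure
  -- Step E: assemble the limit path
  have hβx0 : β ≤ x0 := by
    have hwle : ∀ t, w (φ t) ≤ x0 := fun t => (hKLL (φ t) (hKbot (φ t))).1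
    exact le_of_tendsto hwφ (Filter.Eventually.of_forall hwle)
  have hβlt : β < x0 + vinf := by linarith
  have hβD : ((β:ℝ), (0:ℝ)) ∈ Dε := by
    have hclosure : ((β:ℝ), (0:ℝ)) ∈ closure Dε := by
      rw [Metric.mem_closure_iff]
      intro δ hδ
      have hξ1 : β < min (β + δ/2) (x0 + vinf) := lt_min (by linarith) hβlt
      have hξ2 : min (β + δ/2) (x0 + vinf) ≤ x0 + vinf := min_le_right _ _
      have hξ3 : min (β + δ/2) (x0 + vinf) - β ≤ δ/2 := by
        have := min_le_left (β + δ/2) (x0 + vinf)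
        linarith
      set ξ := min (β + δ/2) (x0 + vinf) with hξdef
      refine ⟨(h ξ, ξ - h ξ), hgD ξ hξ1 hξ2, ?_⟩
      have hm := hmono hξ1.le
      have hl := hlip hξ1.le
      rw [hatβ] at hm hl
      rw [Prod.dist_eq]
      apply max_lt
      · have e1 : dist ((β:ℝ), (0:ℝ)).1 (h ξ, ξ - h ξ).1 = |β - h ξ| := Real.dist_eq _ _
        rw [e1, abs_lt]
        constructor <;> linarith
      · have e2 : dist ((β:ℝ), (0:ℝ)).2 (h ξ, ξ - h ξ).2 = |0 - (ξ - h ξ)| := Real.dist_eq _ _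
        rw [e2, abs_lt]
        constructor <;> linarith
    rwa [hDcl.closure_eq] at hclosure
  have hhcont : Continuous h := by
    apply LipschitzWith.continuous (K := 1)
    apply LipschitzWith.of_dist_le_mul
    intro a b
    rw [Real.dist_eq, Real.dist_eq, NNReal.coe_one, one_mul]
    rcases le_total a b with hab | hab
    · have h1 := hmono hab
      have h2 := hlip hab
      rw [abs_of_nonpos (by linarith), abs_of_nonpos (by linarith)]
      linarith
    · have h1 := hmono hab
      have h2 := hlip hab
      rw [abs_of_nonneg (by linarith), abs_of_nonneg (by linarith)]
      linarith
  have hgcont : Continuous (fun ξ : ℝ => (h ξ, ξ - h ξ)) :=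
    hhcont.prodMk (continuous_id.sub hhcont)
  have hγpath : IsMonPath Dε ((fun ξ : ℝ => (h ξ, ξ - h ξ)) '' Icc β (x0 + vinf)) := by
    refine ⟨?_, ?_, ?_⟩
    · rintro z ⟨ξ, hξ, rfl⟩
      rcases eq_or_lt_of_le hξ.1 with heq | hlt
      · have he : (fun ξ : ℝ => (h ξ, ξ - h ξ)) ξ = ((β:ℝ), (0:ℝ)) := by
          rw [← heq]
          show (h β, β - h β) = ((β:ℝ), (0:ℝ))
          rw [hatβ, sub_self]
        rw [he]
        exact hβD
      · exact hgD ξ hlt hξ.2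
    · exact (isConnected_Icc (by linarith : β ≤ x0 + vinf)).image _ hgcont.continuousOn
    · rintro p ⟨ξ, hξ, rfl⟩ q ⟨ξ', hξ', rfl⟩
      show ((h ξ) - (h ξ')) * ((ξ - h ξ) - (ξ' - h ξ')) ≥ 0
      rcases le_total ξ ξ' with hle | hle
      · have h1 := hmono hle
        have h2 := hlip hle
        have hx : 0 ≤ (h ξ' - h ξ) * ((ξ' - h ξ') - (ξ - h ξ)) :=
          mul_nonneg (by linarith) (by linarith)
        nlinarith [hx]
      · have h1 := hmono hle
        have h2 := hlip hle
        exact mul_nonneg (by linarith) (by linarith)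
  refine ⟨hx0D, ((β:ℝ), (0:ℝ)), ⟨hβIcc, rfl⟩, _, hγpath, ?_, ?_⟩
  · refine ⟨x0 + vinf, ⟨by linarith, le_rfl⟩, ?_⟩
    show (h (x0+vinf), (x0+vinf) - h (x0+vinf)) = (x0, vinf)
    rw [hattop, add_sub_cancel_left]
  · refine ⟨β, ⟨le_rfl, by linarith⟩, ?_⟩
    show (h β, β - h β) = ((β:ℝ), (0:ℝ))
    rw [hatβ, sub_self]

-- ### equality of the bottom pointers

lemma rDown_eq_general {m n : ℕ} {Dε F : Set (ℝ × ℝ)} {r1 r2 : ℝ}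
    (hDcl : IsClosed Dε) (hDsub : Dε ⊆ Dfull m n)
    (hFconv : Convex ℝ F) (hFsub : F ⊆ Dε)
    {p q : ℝ × ℝ} (hpF : p ∈ F) (hqF : q ∈ F)
    (hp2 : 0 < p.2) (hq2 : 0 < q.2) (hq1p : q.1 ≤ p.1) (hq2p : q.2 ≤ p.2)
    (hqg : q ∈ gDown m Dε)
    (hr1p : r1 ≤ p.1) (hr2p : r2 ≤ p.2) (hr2nn : 0 ≤ r2)
    (hprec : ∀ c, c ∈ Dε → c.1 ≤ p.1 → c.2 ≤ p.2 → r1 ≤ c.1 → r2 ≤ c.2 →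
        (c.1 = r1 ∨ c.2 = r2) → (∃ b' ∈ Bside m, Reach Dε c b') → c.1 ≤ q.1 ∧ q.2 ≤ c.2) :
    sSup {u : ℝ | u ∈ Icc (0:ℝ) (2*(m:ℝ)) ∧ Reach Dε p (u, 0)}
      = sSup {u : ℝ | u ∈ Icc (0:ℝ) (2*(m:ℝ)) ∧ Reach Dε q (u, 0)} := by
  obtain ⟨hqD, bq, hbqB, γq, hγq, hqγq, hbqγq⟩ := hqg
  have hbq2 : bq.2 = 0 := hbqB.2
  have hbqe : (bq.1, (0:ℝ)) = bq := (Prod.ext rfl hbq2.symm)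
  have hRqne : (bq.1) ∈ {u : ℝ | u ∈ Icc (0:ℝ) (2*(m:ℝ)) ∧ Reach Dε q (u, 0)} := by
    refine ⟨hbqB.1, ?_⟩
    rw [hbqe]
    exact ⟨γq, hγq, hqγq, hbqγq⟩
  have hsegqp : segment ℝ q p ⊆ Dε := (hFconv.segment_subset hqF hpF).trans hFsub
  have hsegUR : segment ℝ q p ⊆ URq q := by
    intro z hz
    rw [segment_eq_image'] at hz
    obtain ⟨θ, hθ, rfl⟩ := hz
    constructor
    · show q.1 ≤ q.1 + θ * (p - q).1
      have : (p - q).1 = p.1 - q.1 := rfl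
      nlinarith [hθ.1, this]
    · show q.2 ≤ q.2 + θ * (p - q).2
      have : (p - q).2 = p.2 - q.2 := rfl
      nlinarith [hθ.1, this]
  have hsegpath : IsMonPath Dε (segment ℝ q p) := segment_monpath hq1p hq2p hsegqp
  -- (a) everything reachable from q is reachable from p
  have hsub : {u : ℝ | u ∈ Icc (0:ℝ) (2*(m:ℝ)) ∧ Reach Dε q (u, 0)} ⊆
      {u : ℝ | u ∈ Icc (0:ℝ) (2*(m:ℝ)) ∧ Reach Dε p (u, 0)} := by
    rintro u ⟨huIcc, γ, hγ, hqγ, huγ⟩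
    refine ⟨huIcc, ?_⟩
    have hu0LL : (u, (0:ℝ)) ∈ LLq q := by
      constructor
      · show u ≤ q.1
        have hmon := hγ.2.2 q hqγ (u, 0) huγ
        by_contra hcon
        push_neg at hcon
        have : (q.1 - (u, (0:ℝ)).1) * (q.2 - (u, (0:ℝ)).2) < 0 :=
          mul_neg_of_neg_of_pos (by simpa using sub_neg.2 hcon) (by show (0:ℝ) < q.2 - 0; linarith)
        linarith [hmon]
      · show (0:ℝ) ≤ q.2
        linarith
    refine ⟨(γ ∩ LLq q) ∪ segment ℝ q p,
      monpath_concat (hγ.trimLL hqγ) hsegpath ⟨hqγ, self_mem_LLq q⟩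
        (left_mem_segment ℝ q p) inter_subset_right hsegUR,
      Or.inr (right_mem_segment ℝ q p), Or.inl ⟨huγ, hu0LL⟩⟩
  have hRpne : {u : ℝ | u ∈ Icc (0:ℝ) (2*(m:ℝ)) ∧ Reach Dε p (u, 0)}.Nonempty :=
    ⟨bq.1, hsub hRqne⟩
  have hRqbdd : BddAbove {u : ℝ | u ∈ Icc (0:ℝ) (2*(m:ℝ)) ∧ Reach Dε q (u, 0)} :=
    ⟨2*(m:ℝ), fun u hu => hu.1.2⟩
  have hRpbdd : BddAbove {u : ℝ | u ∈ Icc (0:ℝ) (2*(m:ℝ)) ∧ Reach Dε p (u, 0)} :=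
    ⟨2*(m:ℝ), fun u hu => hu.1.2⟩
  apply le_antisymm
  · -- (b)
    apply csSup_le hRpne
    rintro u ⟨huIcc, γu, hγu, hpγu, huγu⟩
    have hu0LLp : (u, (0:ℝ)) ∈ LLq p := by
      constructor
      · show u ≤ p.1
        have hmon := hγu.2.2 p hpγu (u, 0) huγu
        by_contra hcon
        push_neg at hcon
        have : (p.1 - (u, (0:ℝ)).1) * (p.2 - (u, (0:ℝ)).2) < 0 :=
          mul_neg_of_neg_of_pos (by simpa using sub_neg.2 hcon) (by show (0:ℝ) < p.2 - 0; linarith)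
        linarith [hmon]
      · show (0:ℝ) ≤ p.2
        linarith
    obtain ⟨c, hcγ, hcLL, hcr1, hcr2, hceq⟩ := exists_entry hγu hpγu huγu hu0LLp
      (Or.inr (by show (u, (0:ℝ)).2 ≤ r2; simpa using hr2nn)) hr1p hr2p
    have hcD : c ∈ Dε := hγu.1 hcγ
    obtain ⟨hcq1, hqc2⟩ := hprec c hcD hcLL.1 hcLL.2 hcr1 hcr2 hceq
      ⟨(u, 0), ⟨huIcc, rfl⟩, γu, hγu, hcγ, huγu⟩
    have hc2pos : 0 < c.2 := lt_of_lt_of_le hq2 hqc2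
    have huc1 : u ≤ c.1 := by
      have hmon := hγu.2.2 c hcγ (u, 0) huγu
      by_contra hcon
      push_neg at hcon
      have : (c.1 - (u, (0:ℝ)).1) * (c.2 - (u, (0:ℝ)).2) < 0 :=
        mul_neg_of_neg_of_pos (by simpa using sub_neg.2 hcon)
          (by show (0:ℝ) < c.2 - 0; linarith)
      linarith [hmon]
    rcases le_or_gt u bq.1 with hle | hlt
    · exact le_trans hle (le_csSup hRqbdd hRqne)
    · -- crossing argument
      have hclγu := IsMonPath.closure' hDcl hγu
      have hcclos : c ∈ closure γu := subset_closure hcγ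
      have hu0clos : (u, (0:ℝ)) ∈ closure γu := subset_closure huγu
      have hK2 := hclγu.trimLL hcclos
      have hu0K2 : (u, (0:ℝ)) ∈ closure γu ∩ LLq c := ⟨hu0clos, by
        constructor
        · exact huc1
        · show (0:ℝ) ≤ c.2; linarith⟩
      have hKa := hK2.trimUR hu0K2
      have hcKa : c ∈ (closure γu ∩ LLq c) ∩ URq (u, 0) :=
        ⟨⟨hcclos, self_mem_LLq c⟩, huc1, by show (0:ℝ) ≤ c.2; linarith⟩
      have hu0Ka : (u, (0:ℝ)) ∈ (closure γu ∩ LLq c) ∩ URq (u, 0) :=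
        ⟨hu0K2, self_mem_URq _⟩
      -- Kb
      have hclγq := IsMonPath.closure' hDcl hγq
      have hqclos : q ∈ closure γq := subset_closure hqγq
      have hKb := hclγq.trimLL hqclos
      have hKbc : IsCompact (closure γq ∩ LLq q) := by
        apply IsCompact.of_isClosed_subset
          (isCompact_Icc.prod isCompact_Icc : IsCompact (Dfull m n))
          (isClosed_closure.inter (isClosed_LLq _))
        exact inter_subset_left.trans (closure_minimal (hγq.1.trans hDsub)
          (isClosed_Icc.prod isClosed_Icc))
      have hbqLL : bq ∈ LLq q := by
        constructor
        · show bq.1 ≤ q.1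
          have hmon := hγq.2.2 q hqγq bq hbqγq
          by_contra hcon
          push_neg at hcon
          have : (q.1 - bq.1) * (q.2 - bq.2) < 0 :=
            mul_neg_of_neg_of_pos (by linarith) (by rw [hbq2]; linarith)
          linarith [hmon]
        · show bq.2 ≤ q.2
          rw [hbq2]; linarith
      have hbqKb : (bq.1, (0:ℝ)) ∈ closure γq ∩ LLq q := by
        rw [hbqe]
        exact ⟨subset_closure hbqγq, hbqLL⟩
      have hqKb : q ∈ closure γq ∩ LLq q := ⟨hqclos, self_mem_LLq q⟩
      have hKb2 : ∀ z ∈ closure γq ∩ LLq q, 0 ≤ z.2 := by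
        intro z hz
        have : z ∈ Dε := hKb.1 hz
        exact (hDsub this).2.1
      obtain ⟨wpt, hwmem, hwUR, hwLL⟩ := crossing hKa hKb hKbc hcKa hu0Ka
        (inter_subset_left.trans inter_subset_right)
        inter_subset_right hqKb hbqKb inter_subset_right hKb2
        hcq1 hqc2 hlt (le_trans huc1 hcq1) (by linarith)
      -- build a path from q to (u, 0)
      have hP : IsMonPath Dε ((((closure γu ∩ LLq c) ∩ URq (u, 0)) ∩ LLq wpt) ∪
          ((closure γq ∩ LLq q) ∩ URq wpt)) :=
        monpath_concat (hKa.trimLL hwmem.1) (hKb.trimUR hwmem.2)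
          ⟨hwmem.1, self_mem_LLq _⟩ ⟨hwmem.2, self_mem_URq _⟩
          inter_subset_right inter_subset_right
      have hreach : Reach Dε q (u, 0) := by
        refine ⟨_, hP, Or.inr ⟨hqKb, hwLL⟩, Or.inl ⟨hu0Ka, ?_⟩⟩
        exact ⟨hwUR.1, hwUR.2⟩
      exact le_csSup hRqbdd ⟨huIcc, hreach⟩
  · exact csSup_le_csSup hRpbdd ⟨bq.1, hRqne⟩ hsub

lemma segment_subset_URq {a b : ℝ × ℝ} (h1 : a.1 ≤ b.1) (h2 : a.2 ≤ b.2) :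
    segment ℝ a b ⊆ URq a := by
  intro z hz
  rw [segment_eq_image'] at hz
  obtain ⟨θ, hθ, rfl⟩ := hz
  constructor
  · show a.1 ≤ a.1 + θ * (b - a).1
    have e : (b - a).1 = b.1 - a.1 := rfl
    nlinarith [hθ.1]
  · show a.2 ≤ a.2 + θ * (b - a).2
    have e : (b - a).2 = b.2 - a.2 := rfl
    nlinarith [hθ.1]

theorem stmt11
    (k m n : ℕ) (hk : 1 ≤ k) (hm : 1 ≤ m) (hn : 1 ≤ n)
    (x y : ℕ → EuclideanSpace ℝ (Fin k)) (hx : x m = x 0) (hy : y n = y 0)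
    (ε : ℝ) (hε : 0 ≤ ε)
    (Dε : Set (ℝ × ℝ)) (hDε : Dε = Dfree m n x y ε)
    (i j : ℕ) (hi1 : 1 ≤ i) (hi2 : i ≤ 2*m) (hj1 : 1 ≤ j) (hj2 : j ≤ n) :
    ∀ p ∈ gDown m Dε ∩ (cellT i j ∪ cellR i j),
      ∃ q : ℝ × ℝ,
        (q ∈ gDown m Dε ∩ (cellL i j ∪ cellB i j) ∧ q.1 ≤ p.1 ∧ q.2 ≤ p.2) ∧
        (∀ q' : ℝ × ℝ,
          q' ∈ gDown m Dε ∩ (cellL i j ∪ cellB i j) → q'.1 ≤ p.1 → q'.2 ≤ p.2 →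
            prec q' q) ∧
        rDown m Dε p = rDown m Dε q := by
  intro p hp
  obtain ⟨hpg, hpTR⟩ := hp
  have hDcl : IsClosed Dε := by rw [hDε]; exact isClosed_Dfree x y hx ε
  have hDsub : Dε ⊆ Dfull m n := by rw [hDε]; exact fun z hz => hz.1
  have hFconv : Convex ℝ (Dε ∩ cellD i j) := by
    rw [hDε]; exact (cellFree_convex_closed x y hx ε hi1 hi2 hj1 hj2).1
  have hFcl : IsClosed (Dε ∩ cellD i j) := by
    rw [hDε]; exact (cellFree_convex_closed x y hx ε hi1 hi2 hj1 hj2).2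
  have hi1R : (1:ℝ) ≤ (i:ℝ) := by exact_mod_cast hi1
  have hi2R : (i:ℝ) ≤ 2*(m:ℝ) := by exact_mod_cast hi2
  have hj1R : (1:ℝ) ≤ (j:ℝ) := by exact_mod_cast hj1
  have hjnR : (j:ℝ) ≤ (n:ℝ) := by exact_mod_cast hj2
  have hpcell : p ∈ cellD i j := by
    rcases hpTR with h | h
    · refine ⟨h.1, ?_⟩
      have h2 : p.2 = (j:ℝ) := h.2
      rw [h2]; exact ⟨by linarith, le_rfl⟩
    · refine ⟨?_, h.2⟩
      have h1 : p.1 = (i:ℝ) := h.1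
      rw [h1]; exact ⟨by linarith, le_rfl⟩
  have hp1i : (i:ℝ) - 1 ≤ p.1 := hpcell.1.1
  have hp1i' : p.1 ≤ (i:ℝ) := hpcell.1.2
  have hp2j : (j:ℝ) - 1 ≤ p.2 := hpcell.2.1
  have hp2j' : p.2 ≤ (j:ℝ) := hpcell.2.2
  have hpD : p ∈ Dε := hpg.1
  have hpF : p ∈ Dε ∩ cellD i j := ⟨hpD, hpcell⟩
  by_cases hp20 : p.2 = 0
  · -- p is itself on the bottom boundary of the cell
    have hj1eq : (j:ℝ) - 1 = 0 := le_antisymm (by rw [← hp20]; exact hp2j) (by linarith)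
    refine ⟨p, ⟨⟨hpg, Or.inr ⟨hpcell.1, show p.2 = (j:ℝ)-1 by rw [hp20, hj1eq]⟩⟩,
      le_rfl, le_rfl⟩, ?_, rfl⟩
    intro q' hq' h1 h2
    refine ⟨h1, ?_⟩
    rw [hp20]
    exact (hDsub hq'.1.1).2.1
  · have hp2pos : 0 < p.2 := lt_of_le_of_ne (hDsub hpD).2.1 (Ne.symm hp20)
    obtain ⟨b0, hb0B, γ0, hγ0, hpγ0, hb0γ0⟩ := hpg.2
    have hb02 : b0.2 = 0 := hb0B.2
    have hb0LL : b0 ∈ LLq p := by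
      constructor
      · show b0.1 ≤ p.1
        have hmon := hγ0.2.2 p hpγ0 b0 hb0γ0
        by_contra hcon
        push_neg at hcon
        have : (p.1 - b0.1) * (p.2 - b0.2) < 0 :=
          mul_neg_of_neg_of_pos (by linarith) (by rw [hb02]; linarith)
        linarith [hmon]
      · show b0.2 ≤ p.2
        rw [hb02]; linarith
    obtain ⟨c0, hc0γ, hc0LL, hc0r1, hc0r2, hc0eq⟩ :=
      exists_entry hγ0 hpγ0 hb0γ0 hb0LL (Or.inr (by rw [hb02]; linarith)) hp1i hp2j
    have hc0g : c0 ∈ gDown m Dε := ⟨hγ0.1 hc0γ, b0, hb0B, γ0, hγ0, hc0γ, hb0γ0⟩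
    have mkLB : ∀ c : ℝ × ℝ, c.1 ≤ p.1 → c.2 ≤ p.2 → (i:ℝ)-1 ≤ c.1 → (j:ℝ)-1 ≤ c.2 →
        (c.1 = (i:ℝ)-1 ∨ c.2 = (j:ℝ)-1) → c ∈ cellL i j ∪ cellB i j := by
      intro c h1 h2 h3 h4 h5
      rcases h5 with h5 | h5
      · exact Or.inl ⟨h5, h4, by linarith⟩
      · exact Or.inr ⟨⟨h3, by linarith⟩, h5⟩
    by_cases hU : {u0 : ℝ | ((u0, (j:ℝ)-1) : ℝ × ℝ) ∈ gDown m Dε ∧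
        u0 ∈ Icc ((i:ℝ)-1) (i:ℝ) ∧ u0 ≤ p.1}.Nonempty
    · -- CASE B : the greatest element lies on the bottom side of the cell
      obtain ⟨u0, hu0⟩ := hU
      have hUbdd : BddAbove {u0 : ℝ | ((u0, (j:ℝ)-1) : ℝ × ℝ) ∈ gDown m Dε ∧
          u0 ∈ Icc ((i:ℝ)-1) (i:ℝ) ∧ u0 ≤ p.1} := ⟨(i:ℝ), fun u hu => hu.2.1.2⟩
      set U := {u0 : ℝ | ((u0, (j:ℝ)-1) : ℝ × ℝ) ∈ gDown m Dε ∧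
          u0 ∈ Icc ((i:ℝ)-1) (i:ℝ) ∧ u0 ≤ p.1} with hUdef
      have hu0sup : u0 ≤ sSup U := le_csSup hUbdd hu0
      have hsupIcc : sSup U ∈ Icc ((i:ℝ)-1) (i:ℝ) :=
        ⟨le_trans hu0.2.1.1 hu0sup, csSup_le ⟨u0, hu0⟩ (fun u hu => hu.2.1.2)⟩
      have hsup_p1 : sSup U ≤ p.1 := csSup_le ⟨u0, hu0⟩ (fun u hu => hu.2.2)
      have hqF : ((sSup U, (j:ℝ)-1) : ℝ × ℝ) ∈ Dε ∩ cellD i j := by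
        have hUsub : U ⊆ {u : ℝ | ((u, (j:ℝ)-1) : ℝ × ℝ) ∈ Dε ∩ cellD i j} := by
          intro u hu
          exact ⟨hu.1.1, hu.2.1,
            show ((j:ℝ)-1) ∈ Icc ((j:ℝ)-1) (j:ℝ) from ⟨le_rfl, by linarith⟩⟩
        have hclosedset : IsClosed {u : ℝ | ((u, (j:ℝ)-1) : ℝ × ℝ) ∈ Dε ∩ cellD i j} :=
          hFcl.preimage (by fun_prop)
        have h1 := closure_mono hUsub (csSup_mem_closure ⟨u0, hu0⟩ hUbdd)
        rwa [hclosedset.closure_eq] at h1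
      have hc1F : ((u0, (j:ℝ)-1) : ℝ × ℝ) ∈ Dε ∩ cellD i j :=
        ⟨hu0.1.1, hu0.2.1,
          show ((j:ℝ)-1) ∈ Icc ((j:ℝ)-1) (j:ℝ) from ⟨le_rfl, by linarith⟩⟩
      have hsegD : segment ℝ ((u0, (j:ℝ)-1) : ℝ × ℝ) ((sSup U, (j:ℝ)-1) : ℝ × ℝ) ⊆ Dε :=
        fun z hz => (hFconv.segment_subset hc1F hqF hz).1
      have hsegpath : IsMonPath Dε (segment ℝ ((u0, (j:ℝ)-1) : ℝ × ℝ)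
          ((sSup U, (j:ℝ)-1) : ℝ × ℝ)) :=
        segment_monpath (by show u0 ≤ sSup U; exact hu0sup) (le_rfl) hsegD
      have hsegUR : segment ℝ ((u0, (j:ℝ)-1) : ℝ × ℝ) ((sSup U, (j:ℝ)-1) : ℝ × ℝ) ⊆
          URq ((u0, (j:ℝ)-1) : ℝ × ℝ) :=
        segment_subset_URq (by show u0 ≤ sSup U; exact hu0sup) le_rfl
      have hqg : ((sSup U, (j:ℝ)-1) : ℝ × ℝ) ∈ gDown m Dε := by
        obtain ⟨hc1D, b1, hb1B, γ1, hγ1, hc1γ, hb1γ⟩ := hu0.1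
        rcases eq_or_lt_of_le (show (0:ℝ) ≤ (j:ℝ)-1 by linarith) with hj0 | hj0
        · refine ⟨hqF.1, ((u0, (j:ℝ)-1) : ℝ × ℝ),
            ⟨⟨by linarith [hu0.2.1.1], by linarith [hu0.2.1.2]⟩,
              show (j:ℝ)-1 = 0 from hj0.symm⟩,
            _, hsegpath, right_mem_segment _ _ _, left_mem_segment _ _ _⟩
        · have hb12 : b1.2 = 0 := hb1B.2
          have hb1LL : b1 ∈ LLq ((u0, (j:ℝ)-1) : ℝ × ℝ) := by
            constructor
            · show b1.1 ≤ u0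
              have hmon := hγ1.2.2 ((u0, (j:ℝ)-1) : ℝ × ℝ) hc1γ b1 hb1γ
              by_contra hcon
              push_neg at hcon
              have : (((u0, (j:ℝ)-1) : ℝ × ℝ).1 - b1.1) *
                  (((u0, (j:ℝ)-1) : ℝ × ℝ).2 - b1.2) < 0 :=
                mul_neg_of_neg_of_pos (show u0 - b1.1 < 0 by linarith)
                  (show (0:ℝ) < (j:ℝ)-1 - b1.2 by rw [hb12]; linarith)
              linarith [hmon]
            · show b1.2 ≤ (j:ℝ)-1
              rw [hb12]; linarith
          have hP := monpath_concat (hγ1.trimLL hc1γ) hsegpath ⟨hc1γ, self_mem_LLq _⟩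
            (left_mem_segment _ _ _) inter_subset_right hsegUR
          exact ⟨hqF.1, b1, hb1B, _, hP, Or.inr (right_mem_segment _ _ _),
            Or.inl ⟨hb1γ, hb1LL⟩⟩
      have hgreat : ∀ q' : ℝ × ℝ, q' ∈ gDown m Dε ∩ (cellL i j ∪ cellB i j) → q'.1 ≤ p.1 →
          q'.2 ≤ p.2 → q'.1 ≤ sSup U ∧ (j:ℝ)-1 ≤ q'.2 := by
        intro q' hq' h1 h2
        rcases hq'.2 with hL | hB
        · have hq'1 : q'.1 = (i:ℝ)-1 := hL.1
          exact ⟨by rw [hq'1]; linarith [hsupIcc.1], hL.2.1⟩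
        · have hq'2 : q'.2 = (j:ℝ)-1 := hB.2
          refine ⟨?_, le_of_eq hq'2.symm⟩
          have hmem : q'.1 ∈ U := by
            refine ⟨?_, hB.1, h1⟩
            rw [(Prod.ext rfl hq'2.symm : ((q'.1, (j:ℝ)-1) : ℝ × ℝ) = q')]
            exact hq'.1
          exact le_csSup hUbdd hmem
      refine ⟨((sSup U, (j:ℝ)-1) : ℝ × ℝ), ⟨⟨hqg, Or.inr ⟨hsupIcc, rfl⟩⟩, hsup_p1,
        show (j:ℝ)-1 ≤ p.2 from hp2j⟩, fun q' hq' h1 h2 => hgreat q' hq' h1 h2, ?_⟩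
      rcases eq_or_lt_of_le (show (0:ℝ) ≤ (j:ℝ)-1 by linarith) with hj0 | hj0
      · -- q.2 = 0 : direct computation
        have hq20 : ((sSup U, (j:ℝ)-1) : ℝ × ℝ).2 = 0 := hj0.symm
        simp only [rDown]
        rw [if_neg hp20, if_pos hq20]
        have hRpne : {u : ℝ | u ∈ Icc (0:ℝ) (2*(m:ℝ)) ∧ Reach Dε p (u, (0:ℝ))}.Nonempty := by
          refine ⟨b0.1, hb0B.1, ?_⟩
          rw [(Prod.ext rfl hb02.symm : ((b0.1, (0:ℝ)) : ℝ × ℝ) = b0)]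
          exact ⟨γ0, hγ0, hpγ0, hb0γ0⟩
        apply le_antisymm
        · apply csSup_le hRpne
          rintro u ⟨huIcc, γu, hγu, hpγu, huγu⟩
          have hup1 : u ≤ p.1 := by
            have hmon := hγu.2.2 p hpγu (u, 0) huγu
            by_contra hcon
            push_neg at hcon
            have : (p.1 - ((u, (0:ℝ)) : ℝ × ℝ).1) * (p.2 - ((u, (0:ℝ)) : ℝ × ℝ).2) < 0 :=
              mul_neg_of_neg_of_pos (show p.1 - u < 0 by linarith)
                (show (0:ℝ) < p.2 - 0 by linarith)
            linarith [hmon]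
          rcases le_or_gt ((i:ℝ)-1) u with hge | hlt
          · have hmem : u ∈ U := by
              refine ⟨?_, ⟨hge, by linarith⟩, hup1⟩
              have he : ((u, (j:ℝ)-1) : ℝ × ℝ) = ((u, (0:ℝ)) : ℝ × ℝ) := by rw [← hj0]
              rw [he]
              exact ⟨hγu.1 huγu, ((u, (0:ℝ)) : ℝ × ℝ), ⟨huIcc, rfl⟩, γu, hγu, huγu, huγu⟩
            exact le_csSup hUbdd hmem
          · linarith [hsupIcc.1]
        · apply le_csSup ⟨2*(m:ℝ), fun u hu => hu.1.2⟩
          refine ⟨⟨by linarith [hsupIcc.1], by linarith [hsupIcc.2]⟩, ?_⟩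
          have hsegD2 : segment ℝ ((sSup U, (j:ℝ)-1) : ℝ × ℝ) p ⊆ Dε :=
            fun z hz => (hFconv.segment_subset hqF hpF hz).1
          have hreach : Reach Dε p ((sSup U, (j:ℝ)-1) : ℝ × ℝ) :=
            ⟨_, segment_monpath (show sSup U ≤ p.1 from hsup_p1)
              (show (j:ℝ)-1 ≤ p.2 from hp2j) hsegD2,
              right_mem_segment _ _ _, left_mem_segment _ _ _⟩
          have he : ((sSup U, (0:ℝ)) : ℝ × ℝ) = ((sSup U, (j:ℝ)-1) : ℝ × ℝ) := by rw [hj0]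
          rw [he]
          exact hreach
      · -- q.2 > 0 : the general pointer equality
        have hq2ne : ((sSup U, (j:ℝ)-1) : ℝ × ℝ).2 ≠ 0 :=
          show (j:ℝ)-1 ≠ 0 by linarith
        simp only [rDown]
        rw [if_neg hp20, if_neg hq2ne]
        apply rDown_eq_general (r1 := (i:ℝ)-1) (r2 := (j:ℝ)-1) hDcl hDsub hFconv
          inter_subset_left hpF hqF hp2pos (show (0:ℝ) < (j:ℝ)-1 from hj0) hsup_p1
          (show (j:ℝ)-1 ≤ p.2 from hp2j) hqg hp1i hp2j (by linarith)
        intro c hcD h1 h2 h3 h4 h5 hreach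
        obtain ⟨b', hb'B, hr⟩ := hreach
        exact hgreat c ⟨⟨hcD, b', hb'B, hr⟩, mkLB c h1 h2 h3 h4 h5⟩ h1 h2
    · -- CASE L : the greatest element lies on the left side of the cell
      set V := {v0 : ℝ | (((i:ℝ)-1, v0) : ℝ × ℝ) ∈ gDown m Dε ∧
          v0 ∈ Icc ((j:ℝ)-1) (j:ℝ) ∧ v0 ≤ p.2} with hVdef
      have hc0L : c0.1 = (i:ℝ)-1 := by
        rcases hc0eq with h | h
        · exact h
        · exfalso
          apply hU
          refine ⟨c0.1, ?_, ⟨hc0r1, le_trans hc0LL.1 hp1i'⟩, hc0LL.1⟩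
          rw [(Prod.ext rfl h.symm : ((c0.1, (j:ℝ)-1) : ℝ × ℝ) = c0)]
          exact hc0g
      have hVne : V.Nonempty := by
        refine ⟨c0.2, ?_, ⟨hc0r2, le_trans hc0LL.2 hp2j'⟩, hc0LL.2⟩
        rw [(Prod.ext hc0L.symm rfl : (((i:ℝ)-1, c0.2) : ℝ × ℝ) = c0)]
        exact hc0g
      obtain ⟨v0, hv0⟩ := hVne
      have hVbdd : BddBelow V := ⟨(j:ℝ)-1, fun v hv => hv.2.1.1⟩
      have hinfIcc : sInf V ∈ Icc ((j:ℝ)-1) (j:ℝ) :=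
        ⟨le_csInf ⟨v0, hv0⟩ (fun v hv => hv.2.1.1),
          le_trans (csInf_le hVbdd hv0) hv0.2.1.2⟩
      have hinf_p2 : sInf V ≤ p.2 := le_trans (csInf_le hVbdd hv0) hv0.2.2
      have hqF : (((i:ℝ)-1, sInf V) : ℝ × ℝ) ∈ Dε ∩ cellD i j := by
        have hVsub : V ⊆ {v : ℝ | (((i:ℝ)-1, v) : ℝ × ℝ) ∈ Dε ∩ cellD i j} := by
          intro v hv
          exact ⟨hv.1.1,
            show ((i:ℝ)-1) ∈ Icc ((i:ℝ)-1) (i:ℝ) from ⟨le_rfl, by linarith⟩, hv.2.1⟩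
        have hclosedset : IsClosed {v : ℝ | (((i:ℝ)-1, v) : ℝ × ℝ) ∈ Dε ∩ cellD i j} :=
          hFcl.preimage (by fun_prop)
        have h1 := closure_mono hVsub (csInf_mem_closure ⟨v0, hv0⟩ hVbdd)
        rwa [hclosedset.closure_eq] at h1
      have hinfne : sInf V ≠ 0 := by
        intro h0
        apply hU
        have hj10 : (j:ℝ)-1 = 0 :=
          le_antisymm (by rw [← h0]; exact hinfIcc.1) (by linarith)
        refine ⟨(i:ℝ)-1, ?_, ⟨le_rfl, by linarith⟩, hp1i⟩
        have he : (((i:ℝ)-1, (j:ℝ)-1) : ℝ × ℝ) = (((i:ℝ)-1, sInf V) : ℝ × ℝ) := by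
          rw [hj10, h0]
        rw [he]
        exact ⟨hqF.1, (((i:ℝ)-1, sInf V) : ℝ × ℝ),
          ⟨show ((i:ℝ)-1) ∈ Icc (0:ℝ) (2*(m:ℝ)) from ⟨by linarith, by linarith⟩,
            show sInf V = 0 from h0⟩,
          {(((i:ℝ)-1, sInf V) : ℝ × ℝ)}, monpath_singleton hqF.1, rfl, rfl⟩
      have hinfpos : 0 < sInf V :=
        lt_of_le_of_ne (by linarith [hinfIcc.1]) (Ne.symm hinfne)
      obtain ⟨vseq, hvanti, hvtend, hvmem⟩ := exists_seq_tendsto_sInf ⟨v0, hv0⟩ hVbdd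
      have hqg : (((i:ℝ)-1, sInf V) : ℝ × ℝ) ∈ gDown m Dε :=
        gDown_vlimit hDcl hDsub hinfpos (fun t => csInf_le hVbdd (hvmem t)) hvtend
          (fun t => (hvmem t).1) hqF.1
      have hgreat : ∀ q' : ℝ × ℝ, q' ∈ gDown m Dε ∩ (cellL i j ∪ cellB i j) → q'.1 ≤ p.1 →
          q'.2 ≤ p.2 → q'.1 ≤ (i:ℝ)-1 ∧ sInf V ≤ q'.2 := by
        intro q' hq' h1 h2
        rcases hq'.2 with hL | hB
        · have hq'1 : q'.1 = (i:ℝ)-1 := hL.1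
          refine ⟨le_of_eq hq'1, ?_⟩
          apply csInf_le hVbdd
          refine ⟨?_, hL.2, h2⟩
          rw [(Prod.ext hq'1.symm rfl : (((i:ℝ)-1, q'.2) : ℝ × ℝ) = q')]
          exact hq'.1
        · exfalso
          apply hU
          refine ⟨q'.1, ?_, hB.1, h1⟩
          rw [(Prod.ext rfl (show q'.2 = (j:ℝ)-1 from hB.2).symm :
            ((q'.1, (j:ℝ)-1) : ℝ × ℝ) = q')]
          exact hq'.1
      refine ⟨(((i:ℝ)-1, sInf V) : ℝ × ℝ), ⟨⟨hqg, Or.inl ⟨rfl, hinfIcc⟩⟩,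
        show (i:ℝ)-1 ≤ p.1 from hp1i, hinf_p2⟩,
        fun q' hq' h1 h2 => hgreat q' hq' h1 h2, ?_⟩
      have hq2ne : (((i:ℝ)-1, sInf V) : ℝ × ℝ).2 ≠ 0 := hinfne
      simp only [rDown]
      rw [if_neg hp20, if_neg hq2ne]
      apply rDown_eq_general (r1 := (i:ℝ)-1) (r2 := (j:ℝ)-1) hDcl hDsub hFconv
        inter_subset_left hpF hqF hp2pos hinfpos (show (i:ℝ)-1 ≤ p.1 from hp1i) hinf_p2
        hqg hp1i hp2j (by linarith)
      intro c hcD h1 h2 h3 h4 h5 hreach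
      obtain ⟨b', hb'B, hr⟩ := hreach
      exact hgreat c ⟨⟨hcD, b', hb'B, hr⟩, mkLB c h1 h2 h3 h4 h5⟩ h1 h2
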